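/- arXiv:0706.3292 — 7 statements merged into one kernel-verified Lean document; each statement's English description precedes it below -/
import Mathlib

section
/- Fix q ∈ (0,1) and interlacing real numbers x₁ < y₁ < x₂ < ⋯ < x_m < y_m < x_{m+1}, and let μ_k(q), k = 1,…,m+1, be the associated weights. Then μ_k(q) > 0 for every k = 1,…,m+1, and Σ_{k=1}^{m+1} μ_k(q) = 1; that is, the weights μ_k(q) define a probability distribution on the set {x₁,…,x_{m+1}}. -/
open Finset

/-- The weights `μ_k(q)` associated with interlacing sequences
`x₁ < y₁ < x₂ < ⋯ < x_m < y_m < x_{m+1}` (1-based indexing):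
`μ_k(q) = Π_{i=1}^{k−1} (1−q^{x_k−y_i})/(1−q^{x_k−x_i}) ·
Π_{i=k+1}^{m+1} (1−q^{x_k−y_{i−1}})/(1−q^{x_k−x_i})`.
Here `q ^ t` is the real power `exp (t * Real.log q)`. -/
noncomputable def muW (q : ℝ) (m : ℕ) (x y : ℕ → ℝ) (k : ℕ) : ℝ :=
  (∏ i ∈ Finset.Icc 1 (k - 1), (1 - q ^ (x k - y i)) / (1 - q ^ (x k - x i))) *
  (∏ i ∈ Finset.Icc (k + 1) (m + 1), (1 - q ^ (x k - y (i - 1))) / (1 - q ^ (x k - x i)))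

open Polynomial in
/-- Lagrange interpolation evaluated at `0`. -/
lemma lagrange_eval_zero {s : Finset ℕ} {v : ℕ → ℝ} (hinj : Set.InjOn v s)
    (f : ℝ[X]) (hdeg : f.degree < s.card) :
    f.eval 0 = ∑ k ∈ s, f.eval (v k) * ∏ i ∈ s.erase k, (-(v i)) / (v k - v i) := by
  conv_lhs => rw [Lagrange.eq_interpolate hinj hdeg]
  rw [Lagrange.interpolate_apply, eval_finset_sum]
  refine sum_congr rfl fun k _ => ?_
  rw [eval_mul, eval_C]
  congr 1
  rw [Lagrange.basis, eval_prod]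
  refine prod_congr rfl fun i _ => ?_
  simp only [Lagrange.basisDivisor, eval_mul, eval_C, eval_sub, eval_X, zero_sub]
  rw [div_eq_inv_mul]

open Polynomial in
private lemma degree_prod_lin (s : Finset ℕ) (c : ℕ → ℝ) :
    (∏ j ∈ s, (Polynomial.C (c j) - Polynomial.X)).degree = (s.card : WithBot ℕ) := by
  classical
  induction s using Finset.induction with
  | empty => simp
  | @insert a s h ih =>
    have hdeg1 : (Polynomial.C (c a) - Polynomial.X).degree = 1 := by
      rw [show Polynomial.C (c a) - Polynomial.X = -(Polynomial.X - Polynomial.C (c a)) by ring,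
        Polynomial.degree_neg, Polynomial.degree_X_sub_C]
    rw [Finset.prod_insert h, Polynomial.degree_mul, ih, hdeg1,
      Finset.card_insert_of_notMem h]
    push_cast
    ring

private lemma alg_factor (A B C : ℝ) (hB : B ≠ 0) (hC : C ≠ 0) (hCA : C - A ≠ 0) :
    (1 - A / B) / (1 - A / C) = (B - A) / B * (C / (C - A)) := by
  have h1 : 1 - A / C = (C - A) / C := by field_simp
  have h2 : 1 - A / B = (B - A) / B := by field_simp
  rw [h1, h2]
  field_simp

/-- For `q ∈ (0,1)` and interlacing reals `x₁ < y₁ < ⋯ < y_m < x_{m+1}`, the weights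
`μ_k(q)` are strictly positive and sum to `1`: they define a probability distribution on
`{x₁, …, x_{m+1}}`. -/
theorem stmt4 (q : ℝ) (hq : q ∈ Set.Ioo (0 : ℝ) 1) (m : ℕ) (x y : ℕ → ℝ)
    (hxy : ∀ i, 1 ≤ i → i ≤ m → x i < y i)
    (hyx : ∀ i, 1 ≤ i → i ≤ m → y i < x (i + 1)) :
    (∀ k, 1 ≤ k → k ≤ m + 1 → 0 < muW q m x y k) ∧
    (∑ k ∈ Finset.Icc 1 (m + 1), muW q m x y k) = 1 := by
  obtain ⟨hq0, hq1⟩ := hq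
  -- order lemmas on indices
  have xlt : ∀ i j : ℕ, 1 ≤ i → i < j → j ≤ m + 1 → x i < x j := by
    intro i j hi hij hj
    induction j with
    | zero => omega
    | succ n ih =>
      rcases Nat.lt_succ_iff_lt_or_eq.mp hij with h | h
      · have h1 : x i < x n := ih (by omega) (by omega)
        have h2 : x n < x (n + 1) :=
          (hxy n (by omega) (by omega)).trans (hyx n (by omega) (by omega))
        linarith
      · subst h
        exact (hxy i hi (by omega)).trans (hyx i hi (by omega))
  have yltx : ∀ i j : ℕ, 1 ≤ i → i < j → j ≤ m + 1 → y i < x j := by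
    intro i j hi hij hj
    have h1 : y i < x (i + 1) := hyx i hi (by omega)
    rcases Nat.lt_or_ge (i + 1) j with h | h
    · exact h1.trans (xlt (i + 1) j (by omega) h hj)
    · have : j = i + 1 := by omega
      rw [this]; exact h1
  have xlty : ∀ i j : ℕ, 1 ≤ i → i ≤ j → j ≤ m → x i < y j := by
    intro i j hi hij hj
    rcases Nat.lt_or_ge i j with h | h
    · exact (xlt i j hi h (by omega)).trans (hxy j (by omega) hj)
    · have : i = j := by omega
      rw [← this]; exact hxy i hi (by omega)
  -- positivity of the factors
  have hfac1 : ∀ k i : ℕ, 1 ≤ i → i < k → k ≤ m + 1 →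
      0 < (1 - q ^ (x k - y i)) / (1 - q ^ (x k - x i)) := by
    intro k i hi hik hk
    have hy : y i < x k := yltx i k hi hik hk
    have hx : x i < x k := xlt i k hi hik hk
    have h1 : q ^ (x k - y i) < 1 := Real.rpow_lt_one hq0.le hq1 (by linarith)
    have h2 : q ^ (x k - x i) < 1 := Real.rpow_lt_one hq0.le hq1 (by linarith)
    exact div_pos (by linarith) (by linarith)
  have hfac2 : ∀ k i : ℕ, 1 ≤ k → k < i → i ≤ m + 1 →
      0 < (1 - q ^ (x k - y (i - 1))) / (1 - q ^ (x k - x i)) := by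
    intro k i hk hki hi
    have hy : x k < y (i - 1) := xlty k (i - 1) hk (by omega) (by omega)
    have hx : x k < x i := xlt k i hk hki hi
    have h1 : 1 < q ^ (x k - y (i - 1)) :=
      Real.one_lt_rpow_of_pos_of_lt_one_of_neg hq0 hq1 (by linarith)
    have h2 : 1 < q ^ (x k - x i) :=
      Real.one_lt_rpow_of_pos_of_lt_one_of_neg hq0 hq1 (by linarith)
    rw [div_pos_iff]
    right
    constructor <;> linarith
  have hpos : ∀ k, 1 ≤ k → k ≤ m + 1 → 0 < muW q m x y k := by
    intro k hk hkm
    unfold muW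
    apply mul_pos
    · apply prod_pos
      intro i hi
      rw [mem_Icc] at hi
      exact hfac1 k i hi.1 (by omega) hkm
    · apply prod_pos
      intro i hi
      rw [mem_Icc] at hi
      exact hfac2 k i hk (by omega) hi.2
  refine ⟨hpos, ?_⟩
  -- the sum identity
  set a : ℕ → ℝ := fun i => q ^ (x i) with ha
  set b : ℕ → ℝ := fun j => q ^ (y j) with hb
  have apos : ∀ i, 0 < a i := fun i => Real.rpow_pos_of_pos hq0 _
  have bpos : ∀ j, 0 < b j := fun j => Real.rpow_pos_of_pos hq0 _
  have aanti : ∀ i j : ℕ, 1 ≤ i → i < j → j ≤ m + 1 → a j < a i := by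
    intro i j hi hij hj
    exact Real.rpow_lt_rpow_of_exponent_gt hq0 hq1 (xlt i j hi hij hj)
  -- μ_k in product form
  have mu_eq : ∀ k, 1 ≤ k → k ≤ m + 1 →
      muW q m x y k = (∏ j ∈ Icc 1 m, (b j - a k) / b j) *
        ∏ i ∈ (Icc 1 (m + 1)).erase k, a i / (a i - a k) := by
    intro k hk hkm
    have herase : (Icc 1 (m + 1)).erase k = Icc 1 (k - 1) ∪ Icc (k + 1) (m + 1) := by
      ext i
      simp only [mem_erase, mem_Icc, mem_union]
      omega
    have hdisj : Disjoint (Icc 1 (k - 1)) (Icc (k + 1) (m + 1)) := by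
      rw [disjoint_left]
      intro i hi hi'
      rw [mem_Icc] at hi hi'
      omega
    have hIm : Icc 1 m = Icc 1 (k - 1) ∪ Icc k m := by
      ext i
      simp only [mem_Icc, mem_union]
      omega
    have hdisj2 : Disjoint (Icc 1 (k - 1)) (Icc k m) := by
      rw [disjoint_left]
      intro i hi hi'
      rw [mem_Icc] at hi hi'
      omega
    have hshift : (∏ j ∈ Icc k m, (b j - a k) / b j)
        = ∏ i ∈ Icc (k + 1) (m + 1), (b (i - 1) - a k) / b (i - 1) := by
      refine prod_nbij' (fun j => j + 1) (fun i => i - 1) ?_ ?_ ?_ ?_ ?_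
      · intro j hj; rw [mem_Icc] at hj ⊢; omega
      · intro i hi; rw [mem_Icc] at hi ⊢; omega
      · intro j hj; omega
      · intro i hi; rw [mem_Icc] at hi; omega
      · intro j hj; rw [Nat.add_sub_cancel]
    rw [herase, hIm, prod_union hdisj2, prod_union hdisj, hshift]
    unfold muW
    have e1 : ∀ i ∈ Icc 1 (k - 1),
        (1 - q ^ (x k - y i)) / (1 - q ^ (x k - x i))
          = (b i - a k) / b i * (a i / (a i - a k)) := by
      intro i hi
      rw [mem_Icc] at hi
      rw [Real.rpow_sub hq0, Real.rpow_sub hq0]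
      exact alg_factor (a k) (b i) (a i) (bpos i).ne' (apos i).ne'
        (sub_ne_zero_of_ne (aanti i k hi.1 (by omega) hkm).ne')
    have e2 : ∀ i ∈ Icc (k + 1) (m + 1),
        (1 - q ^ (x k - y (i - 1))) / (1 - q ^ (x k - x i))
          = (b (i - 1) - a k) / b (i - 1) * (a i / (a i - a k)) := by
      intro i hi
      rw [mem_Icc] at hi
      rw [Real.rpow_sub hq0, Real.rpow_sub hq0]
      exact alg_factor (a k) (b (i - 1)) (a i) (bpos _).ne' (apos i).ne'
        (sub_ne_zero_of_ne (aanti k i hk (by omega) hi.2).ne)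
    rw [prod_congr rfl e1, prod_congr rfl e2, prod_mul_distrib, prod_mul_distrib]
    ring
  -- the interpolation polynomial
  set f : Polynomial ℝ := ∏ j ∈ Icc 1 m, (Polynomial.C (b j) - Polynomial.X) with hf
  have hinj : Set.InjOn a (Icc 1 (m + 1) : Finset ℕ) := by
    intro i hi j hj hij
    simp only [coe_Icc, Set.mem_Icc] at hi hj
    rcases lt_trichotomy i j with h | h | h
    · exact absurd hij (aanti i j hi.1 h hj.2).ne'
    · exact h
    · exact absurd hij (aanti j i hj.1 h hi.2).ne
  have hdeg : f.degree < ((Icc 1 (m + 1) : Finset ℕ).card : WithBot ℕ) := by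
    have hc : (Icc 1 (m + 1) : Finset ℕ).card = m + 1 := by
      rw [Nat.card_Icc]
      omega
    rw [hc, hf, degree_prod_lin]
    have hcm : (Icc 1 m).card = m := by rw [Nat.card_Icc]; omega
    rw [hcm]
    exact_mod_cast Nat.lt_succ_self m
  have hkey := lagrange_eval_zero hinj f hdeg
  have heval : ∀ k, f.eval (a k) = ∏ j ∈ Icc 1 m, (b j - a k) := by
    intro k
    rw [hf, Polynomial.eval_prod]
    exact prod_congr rfl fun j _ => by simp
  have heval0 : f.eval 0 = ∏ j ∈ Icc 1 m, b j := by
    rw [hf, Polynomial.eval_prod]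
    exact prod_congr rfl fun j _ => by simp
  have hbprod : (∏ j ∈ Icc 1 m, b j) ≠ 0 :=
    (prod_pos fun j _ => bpos j).ne'
  -- combine
  have final : ∀ k ∈ Icc 1 (m + 1),
      muW q m x y k
        = (f.eval (a k) * ∏ i ∈ (Icc 1 (m + 1)).erase k, (-(a i)) / (a k - a i))
          / ∏ j ∈ Icc 1 m, b j := by
    intro k hkI
    rw [mem_Icc] at hkI
    rw [mu_eq k hkI.1 hkI.2, heval]
    have h1 : (∏ j ∈ Icc 1 m, (b j - a k) / b j)
        = (∏ j ∈ Icc 1 m, (b j - a k)) / ∏ j ∈ Icc 1 m, b j := by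
      rw [prod_div_distrib]
    have h2 : (∏ i ∈ (Icc 1 (m + 1)).erase k, a i / (a i - a k))
        = ∏ i ∈ (Icc 1 (m + 1)).erase k, (-(a i)) / (a k - a i) := by
      refine prod_congr rfl fun i _ => ?_
      rw [← neg_div_neg_eq, neg_sub]
    rw [h1, h2]
    ring
  rw [Finset.sum_congr rfl final, ← sum_div, ← hkey, heval0, div_self hbprod]
end

section
/- Let a < b be reals, q ∈ (0,1), μ a Borel probability measure on ℝ supported in [a,b], and f : ℝ → ℝ Lebesgue integrable, vanishing outside [a,b], with ∫ f(s) ds = 0. Set h_n = ∫ q^{−ns} dμ(s) and p_n = 1 − n·ln(q^{−1})·∫ q^{−ns} f(s) ds for n ≥ 1. Then the identity ∫ (1 − q^{x−s})^{−1} dμ(s) = (1 − q^x)^{−1} · exp( −ln(q^{−1}) · ∫ f(s)(1 − q^{x−s})^{−1} ds ) holds for all x > b if and only if the identity 1 + Σ_{n=1}^∞ h_n q^{nx} = exp( Σ_{n=1}^∞ p_n q^{nx}/n ) holds for all x > b. -/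
open MeasureTheory

private lemma geom_shift {r : ℝ} (h0 : 0 ≤ r) (h1 : r < 1) :
    HasSum (fun n : ℕ => r ^ (n + 1)) ((1 - r)⁻¹ - 1) := by
  have h := (hasSum_geometric_of_lt_one h0 h1).mul_left r
  have h2 : (fun n : ℕ => r ^ (n + 1)) = fun n : ℕ => r * r ^ n := by
    funext n; ring
  rw [h2]
  convert h using 1
  · rfl
  have hr : (1 : ℝ) - r ≠ 0 := by linarith
  have hc : (1 - r)⁻¹ * (1 - r) = 1 := inv_mul_cancel₀ hr
  linear_combination hc

private lemma rpow_key {q : ℝ} (hq0 : 0 < q) (n : ℕ) (y : ℝ) :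
    q ^ (((n : ℝ) + 1) * y) = (q ^ y) ^ (n + 1) := by
  rw [mul_comm, Real.rpow_mul hq0.le,
    show ((n : ℝ) + 1) = ((n + 1 : ℕ) : ℝ) by push_cast; ring,
    Real.rpow_natCast]

private lemma rpow_split {q : ℝ} (hq0 : 0 < q) (c x s : ℝ) :
    q ^ (c * (x - s)) = q ^ (c * x) * q ^ (-c * s) := by
  rw [← Real.rpow_add hq0]
  congr 1
  ring

private lemma measurable_base {q x : ℝ} (hq0 : 0 < q) :
    Measurable fun s : ℝ => q ^ (x - s) := by
  have h : (fun s : ℝ => q ^ (x - s)) = fun s => Real.exp (Real.log q * (x - s)) := by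
    funext s; rw [Real.rpow_def_of_pos hq0]
  rw [h]
  exact Real.measurable_exp.comp ((measurable_const.sub measurable_id).const_mul _)

private lemma hasSum_pt {q : ℝ} (hq0 : 0 < q) (hq1 : q < 1) {y : ℝ} (hy : 0 < y) :
    HasSum (fun n : ℕ => q ^ (((n : ℝ) + 1) * y)) ((1 - q ^ y)⁻¹ - 1) := by
  have h1 : q ^ y < 1 := Real.rpow_lt_one hq0.le hq1 hy
  have h0 : (0 : ℝ) ≤ q ^ y := (Real.rpow_pos_of_pos hq0 y).le
  have h := geom_shift h0 h1
  simpa [rpow_key hq0] using h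

private lemma muSide {a b q x : ℝ} (hq0 : 0 < q) (hq1 : q < 1) (hxb : b < x)
    {μ : Measure ℝ} [IsProbabilityMeasure μ] (hsupp : μ (Set.Icc a b)ᶜ = 0) :
    Integrable (fun s => (1 - q ^ (x - s))⁻¹) μ ∧
    (∀ n : ℕ, Integrable (fun s => q ^ (-((n : ℝ) + 1) * s)) μ) ∧
    HasSum (fun n : ℕ => (∫ s, q ^ (-((n : ℝ) + 1) * s) ∂μ) * q ^ (((n : ℝ) + 1) * x))
      ((∫ s, (1 - q ^ (x - s))⁻¹ ∂μ) - 1) := by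
  have aemem : ∀ᵐ s ∂μ, s ∈ Set.Icc a b := by
    rw [ae_iff]
    exact hsupp
  have hxb' : 0 < x - b := by linarith
  set g : ℕ → ℝ → ℝ := fun n s => q ^ (((n : ℝ) + 1) * (x - s)) with hg
  have hmb : Measurable fun s : ℝ => q ^ (x - s) := measurable_base hq0
  have hmg : ∀ n, Measurable (g n) := by
    intro n
    have h : g n = fun s => (q ^ (x - s)) ^ (n + 1) := by
      funext s; exact rpow_key hq0 n (x - s)
    rw [h]; exact hmb.pow_const (n + 1)
  have hpos : ∀ n s, 0 < g n s := fun n s => Real.rpow_pos_of_pos hq0 _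
  have hboundC : ∀ n : ℕ, ∀ᵐ s ∂μ, ‖g n s‖ ≤ q ^ (((n : ℝ) + 1) * (x - b)) := by
    intro n
    filter_upwards [aemem] with s hs
    rw [Real.norm_eq_abs, abs_of_pos (hpos n s)]
    apply Real.rpow_le_rpow_of_exponent_ge hq0 hq1.le
    have h1 : x - b ≤ x - s := by have := hs.2; linarith
    have h2 : (0 : ℝ) ≤ (n : ℝ) + 1 := by positivity
    nlinarith
  have hint : ∀ n, Integrable (g n) μ := fun n =>
    (integrable_const _).mono' (hmg n).aestronglyMeasurable (hboundC n)
  have hC : HasSum (fun n : ℕ => q ^ (((n : ℝ) + 1) * (x - b))) ((1 - q ^ (x - b))⁻¹ - 1) :=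
    hasSum_pt hq0 hq1 hxb'
  have hnormsum : Summable fun n : ℕ => ∫ s, ‖g n s‖ ∂μ := by
    apply Summable.of_nonneg_of_le (fun n => integral_nonneg fun s => norm_nonneg _)
      (fun n => ?_) hC.summable
    calc ∫ s, ‖g n s‖ ∂μ ≤ ∫ _s, q ^ (((n : ℝ) + 1) * (x - b)) ∂μ :=
          integral_mono_ae (hint n).norm (integrable_const _) (hboundC n)
      _ = q ^ (((n : ℝ) + 1) * (x - b)) := by simp
  have hswap := hasSum_integral_of_summable_integral_norm hint hnormsum
  have hintinv : Integrable (fun s => (1 - q ^ (x - s))⁻¹) μ := by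
    apply (integrable_const ((1 - q ^ (x - b))⁻¹)).mono'
      ((measurable_const.sub hmb).inv.aestronglyMeasurable)
    filter_upwards [aemem] with s hs
    have hlt : q ^ (x - s) < 1 := Real.rpow_lt_one hq0.le hq1 (by have := hs.2; linarith)
    have hlt' : q ^ (x - s) ≤ q ^ (x - b) :=
      Real.rpow_le_rpow_of_exponent_ge hq0 hq1.le (by have := hs.2; linarith)
    have h1 : 0 < 1 - q ^ (x - b) := by
      have := Real.rpow_lt_one hq0.le hq1 hxb'
      linarith
    change ‖(1 - q ^ (x - s))⁻¹‖ ≤ _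
    rw [Real.norm_eq_abs, abs_of_pos (inv_pos.mpr (by linarith : (0:ℝ) < 1 - q ^ (x - s)))]
    exact inv_anti₀ h1 (by linarith)
  have hptsum : ∀ᵐ s ∂μ, (∑' n : ℕ, g n s) = (1 - q ^ (x - s))⁻¹ - 1 := by
    filter_upwards [aemem] with s hs
    exact (hasSum_pt hq0 hq1 (by have := hs.2; linarith)).tsum_eq
  have hI : ∫ s, (∑' n, g n s) ∂μ = (∫ s, (1 - q ^ (x - s))⁻¹ ∂μ) - 1 := by
    rw [integral_congr_ae hptsum, integral_sub hintinv (integrable_const 1)]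
    simp
  have hswap' : HasSum (fun n => ∫ s, g n s ∂μ) ((∫ s, (1 - q ^ (x - s))⁻¹ ∂μ) - 1) := by
    rwa [hI] at hswap
  have hint2 : ∀ n : ℕ, Integrable (fun s => q ^ (-((n : ℝ) + 1) * s)) μ := by
    intro n
    have h : (fun s : ℝ => q ^ (-((n : ℝ) + 1) * s))
        = fun s => q ^ (-(((n : ℝ) + 1) * x)) * g n s := by
      funext s
      rw [hg]
      dsimp only
      rw [rpow_split hq0 ((n : ℝ) + 1) x s, ← mul_assoc, ← Real.rpow_add hq0,
        neg_add_cancel, Real.rpow_zero, one_mul]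
    rw [h]
    exact (hint n).const_mul _
  have hIg : ∀ n : ℕ, ∫ s, g n s ∂μ
      = (∫ s, q ^ (-((n : ℝ) + 1) * s) ∂μ) * q ^ (((n : ℝ) + 1) * x) := by
    intro n
    rw [mul_comm, ← integral_const_mul]
    apply integral_congr_ae
    apply ae_of_all
    intro s
    rw [hg]
    exact rpow_split hq0 _ x s
  refine ⟨hintinv, hint2, ?_⟩
  have h : (fun n : ℕ => (∫ s, q ^ (-((n : ℝ) + 1) * s) ∂μ) * q ^ (((n : ℝ) + 1) * x))
      = fun n => ∫ s, g n s ∂μ := by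
    funext n; rw [hIg n]
  rw [h]
  exact hswap'

private lemma fSide {a b q x : ℝ} (hq0 : 0 < q) (hq1 : q < 1) (hxb : b < x)
    {f : ℝ → ℝ} (hf : Integrable f) (hvanish : ∀ s : ℝ, s ∉ Set.Icc a b → f s = 0)
    (hzero : (∫ s, f s) = 0) :
    Integrable (fun s => f s * (1 - q ^ (x - s))⁻¹) ∧
    HasSum (fun n : ℕ => (∫ s, q ^ (-((n : ℝ) + 1) * s) * f s) * q ^ (((n : ℝ) + 1) * x))
      (∫ s, f s * (1 - q ^ (x - s))⁻¹) := by
  have hxb' : 0 < x - b := by linarith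
  have hmb : Measurable fun s : ℝ => q ^ (x - s) := measurable_base hq0
  set g : ℕ → ℝ → ℝ := fun n s => q ^ (((n : ℝ) + 1) * (x - s)) with hg
  have hmg : ∀ n, Measurable (g n) := by
    intro n
    have h : g n = fun s => (q ^ (x - s)) ^ (n + 1) := by
      funext s; exact rpow_key hq0 n (x - s)
    rw [h]; exact hmb.pow_const (n + 1)
  have hbddfg : ∀ n : ℕ, ∀ s, ‖f s * g n s‖ ≤ q ^ (((n : ℝ) + 1) * (x - b)) * ‖f s‖ := by
    intro n s
    by_cases hfs : f s = 0
    · simp [hfs]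
    · have hs : s ∈ Set.Icc a b := by
        by_contra hs; exact hfs (hvanish s hs)
      have hgpos : 0 < g n s := Real.rpow_pos_of_pos hq0 _
      have hgle : g n s ≤ q ^ (((n : ℝ) + 1) * (x - b)) := by
        rw [hg]
        apply Real.rpow_le_rpow_of_exponent_ge hq0 hq1.le
        have h1 : x - b ≤ x - s := by have := hs.2; linarith
        have h2 : (0 : ℝ) ≤ (n : ℝ) + 1 := by positivity
        nlinarith
      calc ‖f s * g n s‖ = ‖f s‖ * g n s := by
            rw [norm_mul, Real.norm_eq_abs (g n s), abs_of_pos hgpos]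
        _ ≤ ‖f s‖ * q ^ (((n : ℝ) + 1) * (x - b)) :=
            mul_le_mul_of_nonneg_left hgle (norm_nonneg _)
        _ = q ^ (((n : ℝ) + 1) * (x - b)) * ‖f s‖ := mul_comm _ _
  have hintfg : ∀ n, Integrable (fun s => f s * g n s) := by
    intro n
    have hmeas : AEStronglyMeasurable (fun s => f s * g n s) volume :=
      hf.aestronglyMeasurable.mul (hmg n).aestronglyMeasurable
    apply Integrable.mono' (hf.norm.const_mul _) hmeas
    exact ae_of_all _ (hbddfg n)
  have hnormle : ∀ n : ℕ, (∫ s, ‖f s * g n s‖)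
      ≤ q ^ (((n : ℝ) + 1) * (x - b)) * ∫ s, ‖f s‖ := by
    intro n
    rw [← integral_const_mul]
    exact integral_mono (hintfg n).norm (hf.norm.const_mul _) (hbddfg n)
  have hC : Summable (fun n : ℕ => q ^ (((n : ℝ) + 1) * (x - b)) * ∫ s, ‖f s‖) :=
    (hasSum_pt hq0 hq1 hxb').summable.mul_right _
  have hnormsum : Summable fun n : ℕ => ∫ s, ‖f s * g n s‖ :=
    Summable.of_nonneg_of_le (fun n => integral_nonneg fun s => norm_nonneg _) hnormle hC
  have hswap := hasSum_integral_of_summable_integral_norm hintfg hnormsum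
  have hpt : ∀ s : ℝ, HasSum (fun n => f s * g n s) (f s * ((1 - q ^ (x - s))⁻¹ - 1)) := by
    intro s
    by_cases hfs : f s = 0
    · simpa [hfs] using hasSum_zero
    · have hs : s ∈ Set.Icc a b := by by_contra hs; exact hfs (hvanish s hs)
      have := (hasSum_pt hq0 hq1 (show (0:ℝ) < x - s by have := hs.2; linarith)).mul_left (f s)
      simpa [hg] using this
  have hintfinv : Integrable (fun s => f s * (1 - q ^ (x - s))⁻¹) := by
    have hmeas : AEStronglyMeasurable (fun s => f s * (1 - q ^ (x - s))⁻¹) volume :=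
      hf.aestronglyMeasurable.mul (measurable_const.sub hmb).inv.aestronglyMeasurable
    apply Integrable.mono' (hf.norm.const_mul ((1 - q ^ (x - b))⁻¹)) hmeas
    apply ae_of_all
    intro s
    by_cases hfs : f s = 0
    · simp [hfs]
    · have hs : s ∈ Set.Icc a b := by by_contra hs; exact hfs (hvanish s hs)
      have h1 : 0 < 1 - q ^ (x - s) := by
        have := Real.rpow_lt_one hq0.le hq1 (show (0:ℝ) < x - s by have := hs.2; linarith)
        linarith
      have h2 : 1 - q ^ (x - b) ≤ 1 - q ^ (x - s) := by
        have := Real.rpow_le_rpow_of_exponent_ge hq0 hq1.le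
          (show x - b ≤ x - s by have := hs.2; linarith)
        linarith
      have h3 : 0 < 1 - q ^ (x - b) := by
        have := Real.rpow_lt_one hq0.le hq1 hxb'
        linarith
      calc ‖f s * (1 - q ^ (x - s))⁻¹‖ = ‖f s‖ * (1 - q ^ (x - s))⁻¹ := by
            rw [norm_mul, Real.norm_eq_abs ((1 - q ^ (x - s))⁻¹),
              abs_of_pos (inv_pos.mpr h1)]
        _ ≤ ‖f s‖ * (1 - q ^ (x - b))⁻¹ :=
            mul_le_mul_of_nonneg_left (inv_anti₀ h3 h2) (norm_nonneg _)
        _ = (1 - q ^ (x - b))⁻¹ * ‖f s‖ := mul_comm _ _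
  have htsum : (∫ s, (∑' n, f s * g n s)) = ∫ s, f s * (1 - q ^ (x - s))⁻¹ := by
    have h : ∀ s, (∑' n, f s * g n s) = f s * (1 - q ^ (x - s))⁻¹ - f s := by
      intro s; rw [(hpt s).tsum_eq]; ring
    rw [integral_congr_ae (ae_of_all _ h), integral_sub hintfinv hf, hzero, sub_zero]
  have hswap' : HasSum (fun n => ∫ s, f s * g n s) (∫ s, f s * (1 - q ^ (x - s))⁻¹) := by
    rwa [htsum] at hswap
  have hIg : ∀ n : ℕ, (∫ s, f s * g n s)
      = (∫ s, q ^ (-((n : ℝ) + 1) * s) * f s) * q ^ (((n : ℝ) + 1) * x) := by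
    intro n
    rw [mul_comm, ← integral_const_mul]
    apply integral_congr_ae
    apply ae_of_all
    intro s
    rw [hg]
    dsimp only
    rw [rpow_split hq0 ((n : ℝ) + 1) x s]
    ring
  refine ⟨hintfinv, ?_⟩
  have h : (fun n : ℕ => (∫ s, q ^ (-((n : ℝ) + 1) * s) * f s) * q ^ (((n : ℝ) + 1) * x))
      = fun n => ∫ s, f s * g n s := by
    funext n; rw [hIg n]
  rw [h]
  exact hswap'

/-- Let `a < b`, `q ∈ (0,1)`, `μ` a Borel probability measure supported in `[a,b]`, and
`f : ℝ → ℝ` Lebesgue integrable, vanishing outside `[a,b]`, with `∫ f = 0`. Put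
`h_n = ∫ q^{−ns} dμ(s)` and `p_n = 1 − n·ln(q⁻¹)·∫ q^{−ns} f(s) ds` for `n ≥ 1`. Then the
q-deformed Markov–Krein identity
`∫ (1 − q^{x−s})⁻¹ dμ(s) = (1 − q^x)⁻¹ · exp(−ln(q⁻¹)·∫ f(s)(1 − q^{x−s})⁻¹ ds)`
holds for all `x > b` iff the identity
`1 + Σ_{n≥1} h_n q^{nx} = exp(Σ_{n≥1} p_n q^{nx}/n)` holds for all `x > b`. -/
theorem stmt8 (a b : ℝ) (hab : a < b) (q : ℝ) (hq : q ∈ Set.Ioo (0 : ℝ) 1)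
    (μ : Measure ℝ) [IsProbabilityMeasure μ] (hsupp : μ (Set.Icc a b)ᶜ = 0)
    (f : ℝ → ℝ) (hf : Integrable f) (hvanish : ∀ s : ℝ, s ∉ Set.Icc a b → f s = 0)
    (hzero : (∫ s, f s) = 0)
    (h p : ℕ → ℝ)
    (hh : ∀ n : ℕ, 1 ≤ n → h n = ∫ s, q ^ (-(n : ℝ) * s) ∂μ)
    (hp : ∀ n : ℕ, 1 ≤ n → p n = 1 - (n : ℝ) * Real.log q⁻¹ * ∫ s, q ^ (-(n : ℝ) * s) * f s) :
    (∀ x : ℝ, b < x →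
        (∫ s, (1 - q ^ (x - s))⁻¹ ∂μ)
          = (1 - q ^ x)⁻¹ *
              Real.exp (-Real.log q⁻¹ * ∫ s, f s * (1 - q ^ (x - s))⁻¹)) ↔
    (∀ x : ℝ, b < x →
        1 + (∑' n : ℕ, h (n + 1) * q ^ (((n : ℝ) + 1) * x))
          = Real.exp (∑' n : ℕ, p (n + 1) * q ^ (((n : ℝ) + 1) * x) / ((n : ℝ) + 1))) := by
  obtain ⟨hq0, hq1⟩ := hq
  -- term translations
  have hterm : ∀ x : ℝ, ∀ n : ℕ, h (n + 1) * q ^ (((n : ℝ) + 1) * x)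
      = (∫ s, q ^ (-((n : ℝ) + 1) * s) ∂μ) * q ^ (((n : ℝ) + 1) * x) := by
    intro x n
    rw [hh (n + 1) (by omega)]
    push_cast
    ring_nf
  have hpterm : ∀ x : ℝ, ∀ n : ℕ, p (n + 1) * q ^ (((n : ℝ) + 1) * x) / ((n : ℝ) + 1)
      = (q ^ x) ^ (n + 1) / ((n : ℝ) + 1)
        - Real.log q⁻¹ * ((∫ s, q ^ (-((n : ℝ) + 1) * s) * f s) * q ^ (((n : ℝ) + 1) * x)) := by
    intro x n
    rw [hp (n + 1) (by omega), ← rpow_key hq0 n x]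
    push_cast
    have hn : ((n : ℝ) + 1) ≠ 0 := by positivity
    field_simp
  rcases le_or_gt 0 b with hb | hb
  · -- case 0 ≤ b : pointwise equivalence
    have key : ∀ x : ℝ, b < x →
        (((∫ s, (1 - q ^ (x - s))⁻¹ ∂μ)
          = (1 - q ^ x)⁻¹ *
              Real.exp (-Real.log q⁻¹ * ∫ s, f s * (1 - q ^ (x - s))⁻¹)) ↔
        (1 + (∑' n : ℕ, h (n + 1) * q ^ (((n : ℝ) + 1) * x))
          = Real.exp (∑' n : ℕ, p (n + 1) * q ^ (((n : ℝ) + 1) * x) / ((n : ℝ) + 1)))) := by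
      intro x hx
      have hx0 : 0 < x := lt_of_le_of_lt hb hx
      obtain ⟨hintinv, hint2, hmu⟩ := muSide hq0 hq1 hx hsupp
      obtain ⟨hintf, hfsum⟩ := fSide hq0 hq1 hx hf hvanish hzero
      have hqx1 : q ^ x < 1 := Real.rpow_lt_one hq0.le hq1 hx0
      have hqxpos : 0 < q ^ x := Real.rpow_pos_of_pos hq0 x
      have hlog : HasSum (fun n : ℕ => (q ^ x) ^ (n + 1) / ((n : ℝ) + 1))
          (-Real.log (1 - q ^ x)) := by
        have := Real.hasSum_pow_div_log_of_abs_lt_one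
          (x := q ^ x) (by rw [abs_of_pos hqxpos]; exact hqx1)
        exact this
      have hpsum : HasSum (fun n : ℕ => p (n + 1) * q ^ (((n : ℝ) + 1) * x) / ((n : ℝ) + 1))
          (-Real.log (1 - q ^ x) - Real.log q⁻¹ * ∫ s, f s * (1 - q ^ (x - s))⁻¹) := by
        have h2 := hfsum.mul_left (Real.log q⁻¹)
        have h3 := hlog.sub h2
        rw [show (fun n : ℕ => p (n + 1) * q ^ (((n : ℝ) + 1) * x) / ((n : ℝ) + 1))
          = fun n : ℕ => (q ^ x) ^ (n + 1) / ((n : ℝ) + 1)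
            - Real.log q⁻¹ * ((∫ s, q ^ (-((n : ℝ) + 1) * s) * f s) * q ^ (((n : ℝ) + 1) * x))
          from funext (hpterm x)]
        exact h3
      have hL2 : 1 + (∑' n : ℕ, h (n + 1) * q ^ (((n : ℝ) + 1) * x))
          = ∫ s, (1 - q ^ (x - s))⁻¹ ∂μ := by
        rw [tsum_congr (hterm x), hmu.tsum_eq]
        ring
      have hR2 : Real.exp (∑' n : ℕ, p (n + 1) * q ^ (((n : ℝ) + 1) * x) / ((n : ℝ) + 1))
          = (1 - q ^ x)⁻¹ *
              Real.exp (-Real.log q⁻¹ * ∫ s, f s * (1 - q ^ (x - s))⁻¹) := by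
        rw [hpsum.tsum_eq, sub_eq_add_neg, Real.exp_add, Real.exp_neg,
          Real.exp_log (by linarith : (0:ℝ) < 1 - q ^ x), ← neg_mul]
      rw [hL2, hR2]
    constructor
    · intro H x hx; exact (key x hx).mp (H x hx)
    · intro H x hx; exact (key x hx).mpr (H x hx)
  · -- case b < 0 : both sides are false
    set x : ℝ := b / 2 with hxdef
    have hx : b < x := by rw [hxdef]; linarith
    have hx0 : x < 0 := by rw [hxdef]; linarith
    obtain ⟨hintinv, hint2, hmu⟩ := muSide hq0 hq1 hx hsupp
    obtain ⟨hintf, hfsum⟩ := fSide hq0 hq1 hx hf hvanish hzero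
    have aemem : ∀ᵐ s ∂μ, s ∈ Set.Icc a b := by
      rw [ae_iff]; exact hsupp
    have hqx : 1 < q ^ x :=
      (Real.one_lt_rpow_iff_of_pos hq0).mpr (Or.inr ⟨hq1, hx0⟩)
    have hMge : (1 : ℝ) ≤ ∫ s, (1 - q ^ (x - s))⁻¹ ∂μ := by
      have hle : ∀ᵐ s ∂μ, (1 : ℝ) ≤ (1 - q ^ (x - s))⁻¹ := by
        filter_upwards [aemem] with s hs
        have h1 : q ^ (x - s) < 1 :=
          Real.rpow_lt_one hq0.le hq1 (by have := hs.2; linarith)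
        have h2 : 0 < q ^ (x - s) := Real.rpow_pos_of_pos hq0 _
        have := inv_anti₀ (by linarith : (0:ℝ) < 1 - q ^ (x - s))
          (by linarith : 1 - q ^ (x - s) ≤ 1)
        simpa using this
      have := integral_mono_ae (integrable_const 1) hintinv hle
      simpa using this
    constructor
    · intro H
      have hE := H x hx
      have hneg : (1 - q ^ x)⁻¹ *
          Real.exp (-Real.log q⁻¹ * ∫ s, f s * (1 - q ^ (x - s))⁻¹) < 0 := by
        apply mul_neg_of_neg_of_pos _ (Real.exp_pos _)
        exact inv_lt_zero.mpr (by linarith)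
      rw [hE] at hMge
      linarith
    · intro H
      have hE := H x hx
      -- the p-series is not summable
      have hns : ¬ Summable
          (fun n : ℕ => p (n + 1) * q ^ (((n : ℝ) + 1) * x) / ((n : ℝ) + 1)) := by
        intro hS
        have hB : Summable (fun n : ℕ =>
            Real.log q⁻¹ * ((∫ s, q ^ (-((n : ℝ) + 1) * s) * f s) * q ^ (((n : ℝ) + 1) * x))) :=
          (hfsum.mul_left (Real.log q⁻¹)).summable
        have hAdd := hS.add hB
        have heq : (fun n : ℕ => p (n + 1) * q ^ (((n : ℝ) + 1) * x) / ((n : ℝ) + 1)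
            + Real.log q⁻¹ * ((∫ s, q ^ (-((n : ℝ) + 1) * s) * f s) * q ^ (((n : ℝ) + 1) * x)))
            = fun n : ℕ => (q ^ x) ^ (n + 1) / ((n : ℝ) + 1) := by
          funext n
          rw [hpterm x n]
          ring
        rw [heq] at hAdd
        have hone : ∀ n : ℕ, 1 / ((n : ℝ) + 1) ≤ (q ^ x) ^ (n + 1) / ((n : ℝ) + 1) := by
          intro n
          apply div_le_div_of_nonneg_right ?_ (by positivity)
          exact one_le_pow₀ hqx.le
        have hsum1 : Summable (fun n : ℕ => 1 / ((n : ℝ) + 1)) :=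
          Summable.of_nonneg_of_le (fun n => by positivity) hone hAdd
        have hsum2 : Summable (fun n : ℕ => 1 / (n : ℝ)) := by
          apply (summable_nat_add_iff 1).mp
          convert hsum1 using 2 with n
          · rfl
          push_cast
          ring
        exact Real.not_summable_one_div_natCast hsum2
      rw [tsum_eq_zero_of_not_summable hns, Real.exp_zero] at hE
      -- but the h-series has positive sum
      have hsummu := hmu.summable
      have hnonneg : ∀ n : ℕ,
          0 ≤ (∫ s, q ^ (-((n : ℝ) + 1) * s) ∂μ) * q ^ (((n : ℝ) + 1) * x) := by
        intro n
        apply mul_nonneg (integral_nonneg fun s => (Real.rpow_pos_of_pos hq0 _).le)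
          (Real.rpow_pos_of_pos hq0 _).le
      have hJ0 : q ^ (-a) ≤ ∫ s, q ^ (-(((0 : ℕ) : ℝ) + 1) * s) ∂μ := by
        have h1 : (∫ _s, q ^ (-a) ∂μ) ≤ ∫ s, q ^ (-(((0 : ℕ) : ℝ) + 1) * s) ∂μ := by
          refine integral_mono_ae (integrable_const _) (hint2 0) ?_
          filter_upwards [aemem] with s hs
          rw [show -(((0 : ℕ) : ℝ) + 1) * s = -s by norm_num]
          exact Real.rpow_le_rpow_of_exponent_ge hq0 hq1.le (by linarith [hs.1])
        simpa using h1
      have hterm0 : 0 < (∫ s, q ^ (-(((0 : ℕ) : ℝ) + 1) * s) ∂μ) * q ^ (((((0 : ℕ)) : ℝ) + 1) * x) := by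
        apply mul_pos _ (Real.rpow_pos_of_pos hq0 _)
        calc (0 : ℝ) < q ^ (-a) := Real.rpow_pos_of_pos hq0 _
          _ ≤ _ := hJ0
      have hTge : (∫ s, q ^ (-(((0 : ℕ) : ℝ) + 1) * s) ∂μ) * q ^ (((((0 : ℕ)) : ℝ) + 1) * x)
          ≤ ∑' n : ℕ, (∫ s, q ^ (-((n : ℝ) + 1) * s) ∂μ) * q ^ (((n : ℝ) + 1) * x) :=
        hsummu.le_tsum 0 fun j _ => hnonneg j
      rw [tsum_congr (hterm x), hmu.tsum_eq] at hE
      rw [hmu.tsum_eq] at hTge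
      have htest : (∫ (s : ℝ), (1 - q ^ (x - s))⁻¹ ∂μ) - 1 ≤ 0 := by linarith [hE]
      have hfin := lt_of_lt_of_le hterm0 hTge
      linarith [hfin, htest]
end

section
/- Let a < b be reals and q ∈ (0,1). If μ and ν are Borel probability measures on ℝ supported in [a,b] such that ∫ (1 − q^{x−s})^{−1} dμ(s) = ∫ (1 − q^{x−s})^{−1} dν(s) for every real x > b, then μ = ν. That is, the q-deformed R-function R_μ(x;q) = (1−q)·∫ (1 − q^{x−s})^{−1} dμ(s), considered for x > b, determines the measure μ uniquely. -/
open MeasureTheory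

/-- A continuous function is integrable w.r.t. a probability measure a.e. supported
on a compact interval. -/
lemma integrable_aux {μ : Measure ℝ} [IsProbabilityMeasure μ] {A B : ℝ}
    (hae : ∀ᵐ x ∂μ, x ∈ Set.Icc A B) {g : ℝ → ℝ} (hg : Continuous g) :
    Integrable g μ := by
  obtain ⟨C, hC⟩ := (isCompact_Icc (a := A) (b := B)).exists_bound_of_continuousOn
    hg.continuousOn
  refine ⟨hg.aestronglyMeasurable, HasFiniteIntegral.of_bounded (C := C) ?_⟩
  filter_upwards [hae] with x hx
  exact hC x hx

set_option maxHeartbeats 1000000 in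
/-- Two probability measures supported in a compact interval with equal moments agree. -/
lemma momentDet {A B : ℝ} (hAB : A < B) (μ ν : Measure ℝ)
    [IsProbabilityMeasure μ] [IsProbabilityMeasure ν]
    (hμ : μ (Set.Icc A B)ᶜ = 0) (hν : ν (Set.Icc A B)ᶜ = 0)
    (h : ∀ n : ℕ, (∫ x, x ^ n ∂μ) = ∫ x, x ^ n ∂ν) : μ = ν := by
  have haeμ : ∀ᵐ x ∂μ, x ∈ Set.Icc A B := by
    rw [ae_iff]; simpa [Set.compl_def] using hμ
  have haeν : ∀ᵐ x ∂ν, x ∈ Set.Icc A B := by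
    rw [ae_iff]; simpa [Set.compl_def] using hν
  -- equal integrals of all polynomials
  have hpoly : ∀ P : Polynomial ℝ, (∫ x, P.eval x ∂μ) = ∫ x, P.eval x ∂ν := by
    intro P
    have hrw : ∀ x : ℝ, P.eval x = ∑ i ∈ Finset.range (P.natDegree + 1),
        P.coeff i * x ^ i := fun x => Polynomial.eval_eq_sum_range x
    simp_rw [hrw]
    rw [integral_finset_sum _ (fun i _ => integrable_aux haeμ (g := fun x => P.coeff i * x ^ i) (continuous_const.mul (continuous_pow i))),
      integral_finset_sum _ (fun i _ => integrable_aux haeν (g := fun x => P.coeff i * x ^ i) (continuous_const.mul (continuous_pow i)))]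
    refine Finset.sum_congr rfl fun i _ => ?_
    rw [integral_const_mul, integral_const_mul, h i]
  -- equal integrals of all continuous functions
  have key : ∀ g : ℝ → ℝ, Continuous g → (∫ x, g x ∂μ) = ∫ x, g x ∂ν := by
    intro g hg
    have main : ∀ ε : ℝ, 0 < ε → |(∫ x, g x ∂μ) - ∫ x, g x ∂ν| ≤ 2 * ε := by
      intro ε hε
      obtain ⟨g', hg'⟩ := ContinuousMap.exists_mem_subalgebra_near_continuousMap_of_separatesPoints
        (polynomialFunctions (Set.Icc A B)) (polynomialFunctions_separatesPoints _)
        ⟨fun x : Set.Icc A B => g x, hg.comp continuous_subtype_val⟩ ε hε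
      have hmem := g'.2
      rw [← SetLike.mem_coe, polynomialFunctions_coe] at hmem
      obtain ⟨P, hP⟩ := hmem
      -- pointwise estimate on [A,B]
      have hbnd : ∀ x ∈ Set.Icc A B, |g x - P.eval x| ≤ ε := by
        intro x hx
        have h1 := ContinuousMap.norm_coe_le_norm
          ((g' : C(Set.Icc A B, ℝ)) - ⟨fun x : Set.Icc A B => g x, hg.comp continuous_subtype_val⟩) ⟨x, hx⟩
        have h2 : ((g' : C(Set.Icc A B, ℝ)) - ⟨fun x : Set.Icc A B => g x, hg.comp continuous_subtype_val⟩)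
            ⟨x, hx⟩ = P.eval x - g x := by
          simp [← hP, Polynomial.toContinuousMapOnAlgHom_apply]
        rw [h2] at h1
        have := h1.trans hg'.le
        rw [Real.norm_eq_abs, abs_sub_comm] at this
        exact this
      have hint : ∀ (ρ : Measure ℝ) [IsProbabilityMeasure ρ], (∀ᵐ x ∂ρ, x ∈ Set.Icc A B) →
          |(∫ x, g x ∂ρ) - ∫ x, P.eval x ∂ρ| ≤ ε := by
        intro ρ _ hae
        rw [← integral_sub (integrable_aux hae hg)
          (integrable_aux hae (Polynomial.continuous P))]
        have := norm_integral_le_of_norm_le_const (μ := ρ)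
          (f := fun x => g x - P.eval x) (C := ε) ?_
        · simpa [measure_univ] using this
        · filter_upwards [hae] with x hx
          rw [Real.norm_eq_abs]
          exact hbnd x hx
      have h1 := hint μ haeμ
      have h2 := hint ν haeν
      have h3 := hpoly P
      rw [abs_le] at h1 h2 ⊢
      constructor <;> linarith [h1.1, h1.2, h2.1, h2.2]
    by_contra hne
    have hd : 0 < |(∫ x, g x ∂μ) - ∫ x, g x ∂ν| := by
      rw [abs_pos]
      exact sub_ne_zero_of_ne hne
    have := main (|(∫ x, g x ∂μ) - ∫ x, g x ∂ν| / 4) (by linarith)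
    linarith
  -- conclude by bounded continuous functions
  refine ext_of_forall_lintegral_eq_of_IsFiniteMeasure fun f => ?_
  have hcont : Continuous fun x : ℝ => (f x : ℝ) := NNReal.continuous_coe.comp f.continuous
  have hk := key _ hcont
  have fin1 := (BoundedContinuousFunction.lintegral_lt_top_of_nnreal μ f).ne
  have fin2 := (BoundedContinuousFunction.lintegral_lt_top_of_nnreal ν f).ne
  rw [← ENNReal.toReal_eq_toReal_iff' fin1 fin2,
    BoundedContinuousFunction.toReal_lintegral_coe_eq_integral,
    BoundedContinuousFunction.toReal_lintegral_coe_eq_integral]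
  exact hk

/-- Geometric series expansion of the integral transform. -/
lemma auxHasSum {a b q : ℝ} (hq0 : 0 < q) (hq1 : q < 1)
    (μ : Measure ℝ) [IsProbabilityMeasure μ] (hae : ∀ᵐ s ∂μ, s ∈ Set.Icc a b)
    {t : ℝ} (ht : |t| < q ^ b) :
    HasSum (fun n : ℕ => (∫ s, (q ^ (-s)) ^ n ∂μ) * t ^ n)
      (∫ s, (1 - t * q ^ (-s))⁻¹ ∂μ) := by
  have hr : (0 : ℝ) < q ^ b := Real.rpow_pos_of_pos hq0 b
  set ρ : ℝ := |t| / q ^ b with hρ_def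
  have hρ0 : 0 ≤ ρ := div_nonneg (abs_nonneg t) hr.le
  have hρ1 : ρ < 1 := (div_lt_one hr).mpr ht
  have hu_cont : Continuous fun s : ℝ => q ^ (-s) := by
    have : (fun s : ℝ => q ^ (-s)) = fun s => Real.exp (Real.log q * (-s)) :=
      funext fun s => Real.rpow_def_of_pos hq0 _
    rw [this]; fun_prop
  have hu_pos : ∀ s : ℝ, 0 < q ^ (-s) := fun s => Real.rpow_pos_of_pos hq0 _
  -- bound for s ∈ [a,b]
  have hub : ∀ s ∈ Set.Icc a b, |t| * q ^ (-s) ≤ ρ := by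
    intro s hs
    have h1 : q ^ (-s) ≤ q ^ (-b) :=
      Real.rpow_le_rpow_of_exponent_ge hq0 hq1.le (neg_le_neg hs.2)
    have h2 : q ^ (-b) = (q ^ b)⁻¹ := Real.rpow_neg hq0.le b
    rw [hρ_def, div_eq_mul_inv, ← h2]
    exact mul_le_mul_of_nonneg_left h1 (abs_nonneg t)
  have hbnd : ∀ (n : ℕ), ∀ s ∈ Set.Icc a b, ‖(t * q ^ (-s)) ^ n‖ ≤ ρ ^ n := by
    intro n s hs
    rw [norm_pow, Real.norm_eq_abs, abs_mul, abs_of_pos (hu_pos s)]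
    exact pow_le_pow_left₀ (by positivity) (hub s hs) n
  have hInt : ∀ n : ℕ, Integrable (fun s => (t * q ^ (-s)) ^ n) μ := fun n =>
    integrable_aux hae (by fun_prop)
  have hSum : Summable fun n : ℕ => ∫ s, ‖(t * q ^ (-s)) ^ n‖ ∂μ := by
    refine Summable.of_nonneg_of_le (fun n => integral_nonneg fun s => norm_nonneg _)
      (fun n => ?_) (summable_geometric_of_lt_one hρ0 hρ1)
    have : (∫ s, ‖(t * q ^ (-s)) ^ n‖ ∂μ) ≤ ∫ _, ρ ^ n ∂μ := by
      refine integral_mono_ae (hInt n).norm (integrable_const _) ?_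
      filter_upwards [hae] with s hs
      exact hbnd n s hs
    simpa [measure_univ] using this
  have H := hasSum_integral_of_summable_integral_norm hInt hSum
  have heq : (∫ s, ∑' n : ℕ, (t * q ^ (-s)) ^ n ∂μ) = ∫ s, (1 - t * q ^ (-s))⁻¹ ∂μ := by
    refine integral_congr_ae ?_
    filter_upwards [hae] with s hs
    refine tsum_geometric_of_norm_lt_one ?_
    rw [Real.norm_eq_abs, abs_mul, abs_of_pos (hu_pos s)]
    exact lt_of_le_of_lt (hub s hs) hρ1
  rw [heq] at H
  convert H using 2 with n
  · rfl
  rw [mul_comm]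
  simp_rw [mul_pow]
  rw [integral_const_mul]

/-- The transform has a power series on the ball of radius `q ^ b`. -/
lemma auxSeries {a b q : ℝ} (hq0 : 0 < q) (hq1 : q < 1)
    (μ : Measure ℝ) [IsProbabilityMeasure μ] (hae : ∀ᵐ s ∂μ, s ∈ Set.Icc a b) :
    HasFPowerSeriesOnBall (fun t => ∫ s, (1 - t * q ^ (-s))⁻¹ ∂μ)
      (fun n => ContinuousMultilinearMap.mkPiRing ℝ (Fin n) (∫ s, (q ^ (-s)) ^ n ∂μ))
      0 (ENNReal.ofReal (q ^ b)) := by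
  have hr : (0 : ℝ) < q ^ b := Real.rpow_pos_of_pos hq0 b
  have hcoeff : ∀ n : ℕ, |∫ s, (q ^ (-s)) ^ n ∂μ| ≤ (q ^ (-b)) ^ n := by
    intro n
    have := norm_integral_le_of_norm_le_const (μ := μ)
      (f := fun s => (q ^ (-s)) ^ n) (C := (q ^ (-b)) ^ n) ?_
    · simpa [measure_univ] using this
    · filter_upwards [hae] with s hs
      rw [Real.norm_eq_abs, abs_pow, abs_of_pos (Real.rpow_pos_of_pos hq0 _)]
      exact pow_le_pow_left₀ (Real.rpow_pos_of_pos hq0 _).le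
        (Real.rpow_le_rpow_of_exponent_ge hq0 hq1.le (neg_le_neg hs.2)) n
  constructor
  · -- radius bound
    show ENNReal.ofReal (q ^ b) ≤ _
    rw [ENNReal.ofReal]
    refine FormalMultilinearSeries.le_radius_of_bound _ 1 fun n => ?_
    rw [ContinuousMultilinearMap.norm_mkPiRing, Real.coe_toNNReal _ hr.le,
      Real.norm_eq_abs]
    calc |∫ s, (q ^ (-s)) ^ n ∂μ| * (q ^ b) ^ n ≤ (q ^ (-b)) ^ n * (q ^ b) ^ n :=
          mul_le_mul_of_nonneg_right (hcoeff n) (by positivity)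
      _ = ((q ^ (-b)) * q ^ b) ^ n := (mul_pow _ _ _).symm
      _ = 1 := by
          rw [← Real.rpow_add hq0]
          simp
  · exact ENNReal.ofReal_pos.mpr hr
  · intro y hy
    rw [mem_emetric_ball_zero_iff, ← ofReal_norm,
      ENNReal.ofReal_lt_ofReal_iff_of_nonneg (norm_nonneg y), Real.norm_eq_abs] at hy
    have H := auxHasSum hq0 hq1 μ hae hy
    convert H using 2 with n
    · rfl
    · rw [ContinuousMultilinearMap.mkPiRing_apply]
      simp [smul_eq_mul, mul_comm]
    · simp

/-- Let `a < b` and `q ∈ (0,1)`. If `μ` and `ν` are Borel probability measures on `ℝ`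
supported in `[a,b]` with `∫ (1 − q^{x−s})⁻¹ dμ(s) = ∫ (1 − q^{x−s})⁻¹ dν(s)` for every
real `x > b`, then `μ = ν`: the q-deformed R-function
`R_μ(x;q) = (1−q)·∫ (1 − q^{x−s})⁻¹ dμ(s)`, considered for `x > b`, determines `μ`. -/
theorem stmt10 (a b : ℝ) (hab : a < b) (q : ℝ) (hq : q ∈ Set.Ioo (0 : ℝ) 1)
    (μ ν : Measure ℝ) [IsProbabilityMeasure μ] [IsProbabilityMeasure ν]
    (hμ : μ (Set.Icc a b)ᶜ = 0) (hν : ν (Set.Icc a b)ᶜ = 0)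
    (hR : ∀ x : ℝ, b < x →
      (∫ s, (1 - q ^ (x - s))⁻¹ ∂μ) = ∫ s, (1 - q ^ (x - s))⁻¹ ∂ν) :
    μ = ν := by
  obtain ⟨hq0, hq1⟩ := hq
  have hr : (0 : ℝ) < q ^ b := Real.rpow_pos_of_pos hq0 b
  have haeμ : ∀ᵐ s ∂μ, s ∈ Set.Icc a b := by
    rw [ae_iff]; simpa [Set.compl_def] using hμ
  have haeν : ∀ᵐ s ∂ν, s ∈ Set.Icc a b := by
    rw [ae_iff]; simpa [Set.compl_def] using hν
  have hFμ := auxSeries hq0 hq1 μ haeμ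
  have hFν := auxSeries hq0 hq1 ν haeν
  -- equality of the transforms on (0, q^b)
  have hEq : Set.EqOn (fun t => ∫ s, (1 - t * q ^ (-s))⁻¹ ∂μ)
      (fun t => ∫ s, (1 - t * q ^ (-s))⁻¹ ∂ν) (Set.Ioo 0 (q ^ b)) := by
    intro t ht
    have hx : q ^ Real.logb q t = t := Real.rpow_logb hq0 hq1.ne ht.1
    have hbx : b < Real.logb q t := by
      by_contra hcon
      push_neg at hcon
      have : q ^ b ≤ q ^ Real.logb q t :=
        Real.rpow_le_rpow_of_exponent_ge hq0 hq1.le hcon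
      rw [hx] at this
      exact absurd ht.2 (not_lt.mpr this)
    have hrw : ∀ s : ℝ, (1 - t * q ^ (-s))⁻¹ = (1 - q ^ (Real.logb q t - s))⁻¹ := by
      intro s
      rw [sub_eq_add_neg (Real.logb q t) s, Real.rpow_add hq0, hx]
    simp only [hrw]
    exact hR _ hbx
  -- identity theorem on the ball
  have hmem : ∀ {z : ℝ}, |z| < q ^ b → z ∈ Metric.eball (0 : ℝ) (ENNReal.ofReal (q ^ b)) := by
    intro z hz
    rw [mem_emetric_ball_zero_iff, ← ofReal_norm,
      ENNReal.ofReal_lt_ofReal_iff_of_nonneg (norm_nonneg z), Real.norm_eq_abs]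
    exact hz
  have hAnalμ : AnalyticOnNhd ℝ (fun t => ∫ s, (1 - t * q ^ (-s))⁻¹ ∂μ)
      (Set.Ioo (-(q ^ b)) (q ^ b)) := fun z hz =>
    hFμ.analyticAt_of_mem (hmem (abs_lt.mpr ⟨hz.1, hz.2⟩))
  have hAnalν : AnalyticOnNhd ℝ (fun t => ∫ s, (1 - t * q ^ (-s))⁻¹ ∂ν)
      (Set.Ioo (-(q ^ b)) (q ^ b)) := fun z hz =>
    hFν.analyticAt_of_mem (hmem (abs_lt.mpr ⟨hz.1, hz.2⟩))
  have hEqU : Set.EqOn (fun t => ∫ s, (1 - t * q ^ (-s))⁻¹ ∂μ)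
      (fun t => ∫ s, (1 - t * q ^ (-s))⁻¹ ∂ν) (Set.Ioo (-(q ^ b)) (q ^ b)) := by
    refine AnalyticOnNhd.eqOn_of_preconnected_of_eventuallyEq hAnalμ hAnalν
      isPreconnected_Ioo (z₀ := q ^ b / 2) ⟨by linarith, by linarith⟩ ?_
    exact Filter.eventuallyEq_of_mem (Ioo_mem_nhds (by linarith) (by linarith) :
      Set.Ioo (0 : ℝ) (q ^ b) ∈ nhds (q ^ b / 2)) hEq
  have hnhds0 : (fun t => ∫ s, (1 - t * q ^ (-s))⁻¹ ∂μ) =ᶠ[nhds 0]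
      (fun t => ∫ s, (1 - t * q ^ (-s))⁻¹ ∂ν) :=
    Filter.eventuallyEq_of_mem (Ioo_mem_nhds (by linarith) hr) hEqU
  have hp := (hFμ.hasFPowerSeriesAt).eq_formalMultilinearSeries
    ((hFν.hasFPowerSeriesAt).congr hnhds0.symm)
  -- equal moments of q^(-s)
  have hmom : ∀ n : ℕ, (∫ s, (q ^ (-s)) ^ n ∂μ) = ∫ s, (q ^ (-s)) ^ n ∂ν := by
    intro n
    have := congrFun hp n
    have h2 := congrArg (fun (m : ContinuousMultilinearMap ℝ (fun _ : Fin n => ℝ) ℝ) =>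
      m fun _ => (1 : ℝ)) this
    simpa [ContinuousMultilinearMap.mkPiRing_apply] using h2
  -- pushforward along u := fun s => q ^ (-s)
  have hu_cont : Continuous fun s : ℝ => q ^ (-s) := by
    have : (fun s : ℝ => q ^ (-s)) = fun s => Real.exp (Real.log q * (-s)) :=
      funext fun s => Real.rpow_def_of_pos hq0 _
    rw [this]; fun_prop
  have hu_meas : Measurable fun s : ℝ => q ^ (-s) := hu_cont.measurable
  have hu_mono : ∀ {s t : ℝ}, s ≤ t → q ^ (-s) ≤ q ^ (-t) := fun h =>
    Real.rpow_le_rpow_of_exponent_ge hq0 hq1.le (neg_le_neg h)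
  have hAB : q ^ (-a) < q ^ (-b) :=
    Real.rpow_lt_rpow_of_exponent_gt hq0 hq1 (neg_lt_neg hab)
  haveI : IsProbabilityMeasure (μ.map fun s : ℝ => q ^ (-s)) :=
    Measure.isProbabilityMeasure_map hu_meas.aemeasurable
  haveI : IsProbabilityMeasure (ν.map fun s : ℝ => q ^ (-s)) :=
    Measure.isProbabilityMeasure_map hu_meas.aemeasurable
  have hsupp : ∀ (ρ : Measure ℝ) [IsProbabilityMeasure ρ], ρ (Set.Icc a b)ᶜ = 0 →
      (ρ.map fun s : ℝ => q ^ (-s)) (Set.Icc (q ^ (-a)) (q ^ (-b)))ᶜ = 0 := by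
    intro ρ _ hρ
    rw [Measure.map_apply hu_meas measurableSet_Icc.compl]
    refine measure_mono_null ?_ hρ
    rw [Set.preimage_compl]
    refine Set.compl_subset_compl.mpr fun s hs => ?_
    exact ⟨hu_mono hs.1, hu_mono hs.2⟩
  have hmap : ∀ (ρ : Measure ℝ) (n : ℕ), (∫ x, x ^ n ∂(ρ.map fun s : ℝ => q ^ (-s)))
      = ∫ s, (q ^ (-s)) ^ n ∂ρ := by
    intro ρ n
    rw [integral_map hu_meas.aemeasurable (by fun_prop)]
  have hmaps : (μ.map fun s : ℝ => q ^ (-s)) = ν.map fun s : ℝ => q ^ (-s) := by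
    refine momentDet hAB _ _ (hsupp μ hμ) (hsupp ν hν) fun n => ?_
    rw [hmap, hmap, hmom n]
  -- pull back via the left inverse
  have hlogq : Real.log q ≠ 0 := by
    have := Real.log_neg hq0 hq1
    linarith
  set ψ : ℝ → ℝ := fun y => -(Real.log y / Real.log q) with hψ_def
  have hψ_meas : Measurable ψ := ((Real.measurable_log.div_const _).neg)
  have hcomp : (ψ ∘ fun s : ℝ => q ^ (-s)) = id := by
    funext s
    simp only [hψ_def, Function.comp_apply, id_eq]
    rw [Real.log_rpow hq0]
    field_simp
  calc μ = (μ.map fun s : ℝ => q ^ (-s)).map ψ := by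
        rw [Measure.map_map hψ_meas hu_meas, hcomp, Measure.map_id]
    _ = (ν.map fun s : ℝ => q ^ (-s)).map ψ := by rw [hmaps]
    _ = ν := by rw [Measure.map_map hψ_meas hu_meas, hcomp, Measure.map_id]
end

section
/- Let a < 0 < b be reals and q ∈ (0,1). Say that a Borel probability measure μ supported in [a,b] and a finite signed Borel measure τ supported in [a,b] with τ(ℝ) = 1 are q-Markov–Krein related if ∫ (1 − q^{x−s})^{−1} dμ(s) = exp( ∫ ln((1 − q^{x−s})^{−1}) dτ(s) ) for every real x > b. Then: (1) if (μ,τ) and (μ,τ') are both q-Markov–Krein related, then τ = τ'; (2) if (μ,τ) and (μ',τ) are both q-Markov–Krein related, then μ = μ'. That is, in the q-deformation of the Markov–Krein correspondence the probability measure and the Rayleigh measure determine each other uniquely. -/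
open MeasureTheory

/-- The integral of a real function against a finite signed Borel measure, defined via the
Jordan decomposition `τ = τ⁺ − τ⁻`. -/
noncomputable def MeasureTheory.SignedMeasure.intg
    (τ : MeasureTheory.SignedMeasure ℝ) (f : ℝ → ℝ) : ℝ :=
  (∫ s, f s ∂τ.toJordanDecomposition.posPart) - ∫ s, f s ∂τ.toJordanDecomposition.negPart

/-- The q-Markov–Krein relation between a probability measure `μ` and a signed (Rayleigh)
measure `τ`: `∫ (1 − q^{x−s})⁻¹ dμ(s) = exp(∫ ln((1 − q^{x−s})⁻¹) dτ(s))` for all `x > b`. -/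
def qMarkovKrein (b q : ℝ) (μ : Measure ℝ) (τ : MeasureTheory.SignedMeasure ℝ) : Prop :=
  ∀ x : ℝ, b < x →
    (∫ s, (1 - q ^ (x - s))⁻¹ ∂μ)
      = Real.exp (τ.intg fun s => Real.log (1 - q ^ (x - s))⁻¹)

namespace QMKAux

variable {a b q : ℝ}

lemma u_cont (hq0 : 0 < q) : Continuous fun s : ℝ => q ^ (-s) := by
  have h : (fun s : ℝ => q ^ (-s)) = fun s : ℝ => Real.exp (Real.log q * (-s)) := by
    funext s; exact Real.rpow_def_of_pos hq0 _
  rw [h]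
  exact Real.continuous_exp.comp (continuous_const.mul continuous_neg)

lemma u_pos (hq0 : 0 < q) (s : ℝ) : 0 < q ^ (-s) := Real.rpow_pos_of_pos hq0 _

lemma u_le (hq0 : 0 < q) (hq1 : q < 1) {s : ℝ} (hs : s ≤ b) :
    q ^ (-s) ≤ (q ^ (b : ℝ))⁻¹ := by
  rw [← Real.rpow_neg hq0.le]
  exact Real.rpow_le_rpow_of_exponent_ge hq0 hq1.le (neg_le_neg hs)

lemma ae_mem {ν : Measure ℝ} (hν : ν (Set.Icc a b)ᶜ = 0) : ∀ᵐ s ∂ν, s ∈ Set.Icc a b := by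
  rw [MeasureTheory.ae_iff]
  exact hν

lemma int_pow (hq0 : 0 < q) (hq1 : q < 1) {ν : Measure ℝ} [IsFiniteMeasure ν]
    (hν : ν (Set.Icc a b)ᶜ = 0) (n : ℕ) :
    Integrable (fun s => (q ^ (-s)) ^ n) ν := by
  refine Integrable.mono' (integrable_const (((q ^ (b:ℝ))⁻¹) ^ n))
    (((u_cont hq0).pow n).aestronglyMeasurable) ?_
  filter_upwards [ae_mem hν] with s hs
  rw [Real.norm_eq_abs, abs_of_nonneg (pow_nonneg (u_pos hq0 s).le n)]
  exact pow_le_pow_left₀ (u_pos hq0 s).le (u_le hq0 hq1 hs.2) n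

lemma moment_bound (hq0 : 0 < q) (hq1 : q < 1) {ν : Measure ℝ} [IsFiniteMeasure ν]
    (hν : ν (Set.Icc a b)ᶜ = 0) (n : ℕ) :
    |∫ s, (q ^ (-s)) ^ n ∂ν| * (q ^ (b:ℝ)) ^ n ≤ (ν Set.univ).toReal := by
  have hb0 : 0 < q ^ (b:ℝ) := Real.rpow_pos_of_pos hq0 b
  have h1 : |∫ s, (q ^ (-s)) ^ n ∂ν| ≤ ((q ^ (b:ℝ))⁻¹) ^ n * (ν Set.univ).toReal := by
    rw [← Real.norm_eq_abs]
    apply norm_integral_le_of_norm_le_const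
    filter_upwards [ae_mem hν] with s hs
    rw [Real.norm_eq_abs, abs_of_nonneg (pow_nonneg (u_pos hq0 s).le n)]
    exact pow_le_pow_left₀ (u_pos hq0 s).le (u_le hq0 hq1 hs.2) n
  calc |∫ s, (q ^ (-s)) ^ n ∂ν| * (q ^ (b:ℝ)) ^ n
      ≤ ((q ^ (b:ℝ))⁻¹) ^ n * (ν Set.univ).toReal * (q ^ (b:ℝ)) ^ n :=
        mul_le_mul_of_nonneg_right h1 (pow_nonneg hb0.le n)
    _ = (ν Set.univ).toReal * (((q ^ (b:ℝ))⁻¹) ^ n * (q ^ (b:ℝ)) ^ n) := by ring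
    _ = (ν Set.univ).toReal := by
        rw [← mul_pow, inv_mul_cancel₀ hb0.ne', one_pow, mul_one]

lemma hasSum_geom (hq0 : 0 < q) (hq1 : q < 1) {ν : Measure ℝ} [IsFiniteMeasure ν]
    (hν : ν (Set.Icc a b)ᶜ = 0) {t : ℝ} (ht : |t| < q ^ (b:ℝ)) :
    HasSum (fun n : ℕ => (∫ s, (q ^ (-s)) ^ n ∂ν) * t ^ n)
      (∫ s, (1 - t * q ^ (-s))⁻¹ ∂ν) := by
  have hb0 : 0 < q ^ (b:ℝ) := Real.rpow_pos_of_pos hq0 b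
  have htD : |t| * (q ^ (b:ℝ))⁻¹ < 1 := by
    rw [← div_eq_mul_inv]
    exact (div_lt_one hb0).mpr ht
  have hptw : ∀ s ∈ Set.Icc a b, ‖t * q ^ (-s)‖ ≤ |t| * (q ^ (b:ℝ))⁻¹ := by
    intro s hs
    rw [Real.norm_eq_abs, abs_mul, abs_of_nonneg (u_pos hq0 s).le]
    exact mul_le_mul_of_nonneg_left (u_le hq0 hq1 hs.2) (abs_nonneg t)
  have hF_int : ∀ n : ℕ, Integrable (fun s => (t * q ^ (-s)) ^ n) ν := by
    intro n
    simpa only [mul_pow] using (int_pow hq0 hq1 hν n).const_mul (t ^ n)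
  have hF_sum : Summable fun n : ℕ => ∫ s, ‖(t * q ^ (-s)) ^ n‖ ∂ν := by
    apply Summable.of_nonneg_of_le (fun n => integral_nonneg fun s => norm_nonneg _)
      (fun n => ?_)
      ((summable_geometric_of_lt_one (by positivity) htD).mul_right ((ν Set.univ).toReal))
    calc ∫ s, ‖(t * q ^ (-s)) ^ n‖ ∂ν
        ≤ ∫ _, (|t| * (q ^ (b:ℝ))⁻¹) ^ n ∂ν := by
          apply integral_mono_ae (hF_int n).norm (integrable_const _)
          filter_upwards [ae_mem hν] with s hs
          rw [norm_pow]
          exact pow_le_pow_left₀ (norm_nonneg _) (hptw s hs) n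
      _ = (|t| * (q ^ (b:ℝ))⁻¹) ^ n * (ν Set.univ).toReal := by
          rw [integral_const, smul_eq_mul, mul_comm]
          rfl
  have key := hasSum_integral_of_summable_integral_norm hF_int hF_sum
  have h1 : (fun n : ℕ => ∫ s, (t * q ^ (-s)) ^ n ∂ν)
      = fun n : ℕ => (∫ s, (q ^ (-s)) ^ n ∂ν) * t ^ n := by
    funext n
    simp only [mul_pow]
    rw [integral_const_mul, mul_comm]
  have h2 : ∫ s, ∑' n : ℕ, (t * q ^ (-s)) ^ n ∂ν = ∫ s, (1 - t * q ^ (-s))⁻¹ ∂ν := by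
    apply integral_congr_ae
    filter_upwards [ae_mem hν] with s hs
    exact tsum_geometric_of_norm_lt_one ((hptw s hs).trans_lt htD)
  rw [h1, h2] at key
  exact key

lemma hasSum_log (hq0 : 0 < q) (hq1 : q < 1) {ν : Measure ℝ} [IsFiniteMeasure ν]
    (hν : ν (Set.Icc a b)ᶜ = 0) {t : ℝ} (ht : |t| < q ^ (b:ℝ)) :
    HasSum (fun n : ℕ => (∫ s, (q ^ (-s)) ^ (n+1) ∂ν) / ((n:ℝ)+1) * t ^ (n+1))
      (∫ s, Real.log (1 - t * q ^ (-s))⁻¹ ∂ν) := by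
  have hb0 : 0 < q ^ (b:ℝ) := Real.rpow_pos_of_pos hq0 b
  have htD : |t| * (q ^ (b:ℝ))⁻¹ < 1 := by
    rw [← div_eq_mul_inv]
    exact (div_lt_one hb0).mpr ht
  have hptw : ∀ s ∈ Set.Icc a b, ‖t * q ^ (-s)‖ ≤ |t| * (q ^ (b:ℝ))⁻¹ := by
    intro s hs
    rw [Real.norm_eq_abs, abs_mul, abs_of_nonneg (u_pos hq0 s).le]
    exact mul_le_mul_of_nonneg_left (u_le hq0 hq1 hs.2) (abs_nonneg t)
  have hF_int : ∀ n : ℕ, Integrable (fun s => (t * q ^ (-s)) ^ (n+1) / ((n:ℝ)+1)) ν := by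
    intro n
    have := (int_pow hq0 hq1 hν (n+1)).const_mul (t ^ (n+1) / ((n:ℝ)+1))
    simpa only [div_mul_eq_mul_div, ← mul_pow] using this
  have hF_sum : Summable fun n : ℕ => ∫ s, ‖(t * q ^ (-s)) ^ (n+1) / ((n:ℝ)+1)‖ ∂ν := by
    have hgeo : Summable fun n : ℕ =>
        (|t| * (q ^ (b:ℝ))⁻¹) ^ (n+1) * (ν Set.univ).toReal :=
      (((summable_geometric_of_lt_one (by positivity) htD).mul_right
        ((ν Set.univ).toReal)).comp_injective (add_left_injective 1))
    apply Summable.of_nonneg_of_le (fun n => integral_nonneg fun s => norm_nonneg _)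
      (fun n => ?_) hgeo
    calc ∫ s, ‖(t * q ^ (-s)) ^ (n+1) / ((n:ℝ)+1)‖ ∂ν
        ≤ ∫ _, (|t| * (q ^ (b:ℝ))⁻¹) ^ (n+1) ∂ν := by
          apply integral_mono_ae (hF_int n).norm (integrable_const _)
          filter_upwards [ae_mem hν] with s hs
          rw [norm_div, norm_pow]
          refine (div_le_self (by positivity) ?_).trans ?_
          · rw [Real.norm_eq_abs, abs_of_nonneg (by positivity : (0:ℝ) ≤ (n:ℝ)+1)]
            linarith [Nat.cast_nonneg (α := ℝ) n]
          · exact pow_le_pow_left₀ (norm_nonneg _) (hptw s hs) (n+1)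
      _ = (|t| * (q ^ (b:ℝ))⁻¹) ^ (n+1) * (ν Set.univ).toReal := by
          rw [integral_const, smul_eq_mul, mul_comm]
          rfl
  have key := hasSum_integral_of_summable_integral_norm hF_int hF_sum
  have h1 : (fun n : ℕ => ∫ s, (t * q ^ (-s)) ^ (n+1) / ((n:ℝ)+1) ∂ν)
      = fun n : ℕ => (∫ s, (q ^ (-s)) ^ (n+1) ∂ν) / ((n:ℝ)+1) * t ^ (n+1) := by
    funext n
    have h0 : (fun s : ℝ => (t * q ^ (-s)) ^ (n+1) / ((n:ℝ)+1))
        = fun s : ℝ => (t ^ (n+1) / ((n:ℝ)+1)) * (q ^ (-s)) ^ (n+1) := by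
      funext s; rw [mul_pow]; ring
    rw [h0, integral_const_mul]
    ring
  have h2 : ∫ s, ∑' n : ℕ, (t * q ^ (-s)) ^ (n+1) / ((n:ℝ)+1) ∂ν
      = ∫ s, Real.log (1 - t * q ^ (-s))⁻¹ ∂ν := by
    apply integral_congr_ae
    filter_upwards [ae_mem hν] with s hs
    have habs : |t * q ^ (-s)| < 1 := by
      rw [← Real.norm_eq_abs]
      exact (hptw s hs).trans_lt htD
    rw [Real.log_inv]
    exact (Real.hasSum_pow_div_log_of_abs_lt_one habs).tsum_eq
  rw [h1, h2] at key
  exact key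

/-- The formal power series with scalar coefficients `c`. -/
noncomputable def mkSeries (c : ℕ → ℝ) : FormalMultilinearSeries ℝ ℝ ℝ :=
  fun n => ContinuousMultilinearMap.mkPiRing ℝ (Fin n) (c n)

lemma mkSeries_apply (c : ℕ → ℝ) (n : ℕ) (y : ℝ) :
    (mkSeries c n) (fun _ => y) = c n * y ^ n := by
  rw [mkSeries, ContinuousMultilinearMap.mkPiRing_apply, smul_eq_mul, Finset.prod_const,
    Finset.card_univ, Fintype.card_fin, mul_comm]

lemma mkSeries_norm (c : ℕ → ℝ) (n : ℕ) : ‖mkSeries c n‖ = |c n| := by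
  rw [mkSeries, ContinuousMultilinearMap.norm_mkPiRing, Real.norm_eq_abs]

lemma mkSeries_coeff (c : ℕ → ℝ) (n : ℕ) : (mkSeries c).coeff n = c n := by
  have := mkSeries_apply c n 1
  simpa using this

lemma hasFPB (hb0 : 0 < q ^ (b:ℝ)) (c : ℕ → ℝ) (C : ℝ)
    (hC : ∀ n, |c n| * (q ^ (b:ℝ)) ^ n ≤ C) {f : ℝ → ℝ}
    (hsum : ∀ t : ℝ, |t| < q ^ (b:ℝ) → HasSum (fun n => c n * t ^ n) (f t)) :
    HasFPowerSeriesOnBall f (mkSeries c) 0 (ENNReal.ofReal (q ^ (b:ℝ))) := by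
  constructor
  · rw [ENNReal.ofReal_eq_coe_nnreal hb0.le]
    apply FormalMultilinearSeries.le_radius_of_bound _ C
    intro n
    rw [mkSeries_norm]
    exact hC n
  · exact ENNReal.ofReal_pos.mpr hb0
  · intro y hy
    rw [EMetric.mem_ball, edist_dist, ENNReal.ofReal_lt_ofReal_iff hb0,
      dist_zero_right, Real.norm_eq_abs] at hy
    have := hsum y hy
    simp only [mkSeries_apply, zero_add]
    exact this

lemma coeff_eq (hb0 : 0 < q ^ (b:ℝ)) {c c' : ℕ → ℝ} {f f' : ℝ → ℝ}
    (h : HasFPowerSeriesOnBall f (mkSeries c) 0 (ENNReal.ofReal (q ^ (b:ℝ))))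
    (h' : HasFPowerSeriesOnBall f' (mkSeries c') 0 (ENNReal.ofReal (q ^ (b:ℝ))))
    (heq : ∀ t ∈ Set.Ioo (0:ℝ) (q ^ (b:ℝ)), f t = f' t) : c = c' := by
  have hball : Metric.eball (0:ℝ) (ENNReal.ofReal (q ^ (b:ℝ)))
      = Metric.ball (0:ℝ) (q ^ (b:ℝ)) := Metric.emetric_ball
  have han := h.analyticOnNhd
  have han' := h'.analyticOnNhd
  rw [hball] at han han'
  have hpre : IsPreconnected (Metric.ball (0:ℝ) (q ^ (b:ℝ))) :=
    (convex_ball _ _).isPreconnected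
  have hmem : q ^ (b:ℝ) / 2 ∈ Metric.ball (0:ℝ) (q ^ (b:ℝ)) := by
    rw [Metric.mem_ball, dist_zero_right, Real.norm_eq_abs, abs_of_pos (half_pos hb0)]
    exact half_lt_self hb0
  have hIoo : Set.Ioo (0:ℝ) (q ^ (b:ℝ)) ∈ nhds (q ^ (b:ℝ) / 2) :=
    isOpen_Ioo.mem_nhds ⟨half_pos hb0, half_lt_self hb0⟩
  have hfreq : ∃ᶠ z in nhdsWithin (q ^ (b:ℝ) / 2) {q ^ (b:ℝ) / 2}ᶜ, f z = f' z := by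
    apply Filter.Eventually.frequently
    exact nhdsWithin_le_nhds (Filter.eventually_of_mem hIoo fun z hz => heq z hz)
  have heqball : Set.EqOn f f' (Metric.ball (0:ℝ) (q ^ (b:ℝ))) :=
    han.eqOn_of_preconnected_of_frequently_eq han' hpre hmem hfreq
  have hev : f =ᶠ[nhds (0:ℝ)] f' :=
    Filter.eventually_of_mem (Metric.isOpen_ball.mem_nhds (Metric.mem_ball_self hb0)) heqball
  have hp := h.hasFPowerSeriesAt
  have hp' := (h'.hasFPowerSeriesAt).congr hev.symm
  have hpp := hp.eq_formalMultilinearSeries hp'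
  funext n
  calc c n = (mkSeries c).coeff n := (mkSeries_coeff c n).symm
    _ = (mkSeries c').coeff n := by rw [hpp]
    _ = c' n := mkSeries_coeff c' n

lemma exists_x (hq0 : 0 < q) (hq1 : q < 1) {t : ℝ}
    (ht : t ∈ Set.Ioo (0:ℝ) (q ^ (b:ℝ))) :
    ∃ x : ℝ, b < x ∧ ∀ s : ℝ, q ^ (x - s) = t * q ^ (-s) := by
  have hlq : Real.log q < 0 := Real.log_neg hq0 hq1
  refine ⟨Real.log t / Real.log q, ?_, ?_⟩
  · rw [lt_div_iff_of_neg hlq, ← Real.log_rpow hq0]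
    exact Real.log_lt_log ht.1 ht.2
  · intro s
    rw [sub_eq_add_neg, Real.rpow_add hq0]
    congr 1
    rw [Real.rpow_def_of_pos hq0, mul_comm, div_mul_cancel₀ _ (ne_of_lt hlq)]
    exact Real.exp_log ht.1

lemma meas_ext (hq0 : 0 < q) (hq1 : q < 1)
    {ν ν' : Measure ℝ} [IsFiniteMeasure ν] [IsFiniteMeasure ν']
    (hν : ν (Set.Icc a b)ᶜ = 0) (hν' : ν' (Set.Icc a b)ᶜ = 0)
    (h : ∀ n : ℕ, ∫ s, (q ^ (-s)) ^ n ∂ν = ∫ s, (q ^ (-s)) ^ n ∂ν') : ν = ν' := by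
  have hmono : StrictMono (fun s : ℝ => q ^ (-s)) := fun x y hxy =>
    (Real.rpow_lt_rpow_left_iff_of_base_lt_one hq0 hq1).mpr (neg_lt_neg hxy)
  have hpint : ∀ (P : Polynomial ℝ) (ρ : Measure ℝ) [IsFiniteMeasure ρ],
      ρ (Set.Icc a b)ᶜ = 0 → Integrable (fun s => P.eval (q ^ (-s))) ρ := by
    intro P ρ _ hρ
    simp only [Polynomial.eval_eq_sum_range]
    exact integrable_finset_sum _ fun i _ => (int_pow hq0 hq1 hρ i).const_mul _
  have hpeq : ∀ P : Polynomial ℝ,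
      ∫ s, P.eval (q ^ (-s)) ∂ν = ∫ s, P.eval (q ^ (-s)) ∂ν' := by
    intro P
    have e : ∀ (ρ : Measure ℝ) [IsFiniteMeasure ρ], ρ (Set.Icc a b)ᶜ = 0 →
        ∫ s, P.eval (q ^ (-s)) ∂ρ
          = ∑ i ∈ Finset.range (P.natDegree + 1), P.coeff i * ∫ s, (q ^ (-s)) ^ i ∂ρ := by
      intro ρ _ hρ
      simp only [Polynomial.eval_eq_sum_range]
      rw [integral_finset_sum _ fun i _ => (int_pow hq0 hq1 hρ i).const_mul _]
      exact Finset.sum_congr rfl fun i _ => integral_const_mul _ _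
    rw [e ν hν, e ν' hν']
    exact Finset.sum_congr rfl fun i _ => by rw [h i]
  haveI : CompactSpace ↥(Set.Icc a b) := isCompact_iff_compactSpace.mp isCompact_Icc
  set uX : C(↥(Set.Icc a b), ℝ) :=
    ⟨fun s => q ^ (-(s:ℝ)), (u_cont hq0).comp continuous_subtype_val⟩ with huX
  have hsep : (Algebra.adjoin ℝ {uX}).SeparatesPoints := by
    intro x y hxy
    refine ⟨(uX : ↥(Set.Icc a b) → ℝ), ⟨uX, Algebra.subset_adjoin (Set.mem_singleton _), rfl⟩, ?_⟩
    intro hcon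
    exact hxy (Subtype.ext (hmono.injective hcon))
  have hclos := ContinuousMap.subalgebra_topologicalClosure_eq_top_of_separatesPoints _ hsep
  have hcont : ∀ g : ℝ → ℝ, Continuous g → Integrable g ν → Integrable g ν' →
      ∫ s, g s ∂ν = ∫ s, g s ∂ν' := by
    intro g hg hgi hgi'
    set K : ℝ := (ν Set.univ).toReal + (ν' Set.univ).toReal with hK
    have hK0 : 0 ≤ K := by positivity
    have habs : ∀ ε : ℝ, 0 < ε → |(∫ s, g s ∂ν) - ∫ s, g s ∂ν'| ≤ ε * K := by
      intro ε hε
      set f : C(↥(Set.Icc a b), ℝ) := ⟨fun s => g s, hg.comp continuous_subtype_val⟩ with hf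
      have hfc : f ∈ closure ((Algebra.adjoin ℝ {uX} : Subalgebra ℝ _) :
          Set C(↥(Set.Icc a b), ℝ)) := by
        rw [← Subalgebra.topologicalClosure_coe, hclos]
        trivial
      obtain ⟨p, hpA, hpd⟩ := Metric.mem_closure_iff.mp hfc ε hε
      rw [Algebra.adjoin_singleton_eq_range_aeval] at hpA
      obtain ⟨P, hP⟩ := hpA
      have key : ∀ (ρ : Measure ℝ) [IsFiniteMeasure ρ], ρ (Set.Icc a b)ᶜ = 0 →
          Integrable g ρ →
          |(∫ s, g s ∂ρ) - ∫ s, P.eval (q ^ (-s)) ∂ρ| ≤ ε * (ρ Set.univ).toReal := by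
        intro ρ _ hρ hgρ
        rw [← integral_sub hgρ (hpint P ρ hρ), ← Real.norm_eq_abs]
        apply norm_integral_le_of_norm_le_const
        filter_upwards [ae_mem hρ] with s hs
        have hd := ContinuousMap.dist_apply_le_dist (f := f) (g := p) ⟨s, hs⟩
        have hps : p ⟨s, hs⟩ = P.eval (q ^ (-s)) := by
          rw [← hP]
          exact Polynomial.aeval_continuousMap_apply P uX ⟨s, hs⟩
        rw [hps] at hd
        have : f ⟨s, hs⟩ = g s := rfl
        rw [this] at hd
        rw [Real.norm_eq_abs, ← Real.dist_eq]
        exact hd.trans hpd.le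
      have hmid := hpeq P
      calc |(∫ s, g s ∂ν) - ∫ s, g s ∂ν'|
          ≤ |(∫ s, g s ∂ν) - ∫ s, P.eval (q ^ (-s)) ∂ν'|
            + |(∫ s, P.eval (q ^ (-s)) ∂ν') - ∫ s, g s ∂ν'| := abs_sub_le _ _ _
        _ = |(∫ s, g s ∂ν) - ∫ s, P.eval (q ^ (-s)) ∂ν|
            + |(∫ s, g s ∂ν') - ∫ s, P.eval (q ^ (-s)) ∂ν'| := by
            rw [← hmid, abs_sub_comm (∫ s, P.eval (q ^ (-s)) ∂ν) (∫ s, g s ∂ν')]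
        _ ≤ ε * (ν Set.univ).toReal + ε * (ν' Set.univ).toReal :=
            add_le_add (key ν hν hgi) (key ν' hν' hgi')
        _ = ε * K := by rw [hK]; ring
    have hzero : |(∫ s, g s ∂ν) - ∫ s, g s ∂ν'| ≤ 0 := by
      refine le_of_forall_pos_le_add fun ε hε => ?_
      have := habs (ε / (K + 1)) (by positivity)
      refine this.trans ?_
      rw [zero_add, div_mul_eq_mul_div]
      rw [div_le_iff₀ (by positivity : (0:ℝ) < K + 1)]
      nlinarith
    have := abs_nonpos_iff.mp hzero
    linarith [sub_eq_zero.mp this]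
  apply ext_of_forall_lintegral_eq_of_IsFiniteMeasure
  intro f
  have hcf : Continuous fun x : ℝ => (f x : ℝ) := NNReal.continuous_coe.comp f.continuous
  have hint : ∀ (ρ : Measure ℝ) [IsFiniteMeasure ρ], ρ (Set.Icc a b)ᶜ = 0 →
      Integrable (fun x => (f x : ℝ)) ρ := by
    intro ρ _ hρ
    have hres : ρ.restrict (Set.Icc a b) = ρ :=
      Measure.restrict_eq_self_of_ae_mem (ae_mem hρ)
    rw [← hres]
    exact hcf.continuousOn.integrableOn_compact isCompact_Icc
  rw [lintegral_coe_eq_integral _ (hint ν hν), lintegral_coe_eq_integral _ (hint ν' hν')]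
  congr 1
  exact hcont _ hcf (hint ν hν) (hint ν' hν')

lemma mu_series (hq0 : 0 < q) (hq1 : q < 1) (hb0 : 0 < q ^ (b:ℝ))
    (ν : Measure ℝ) [IsFiniteMeasure ν] (hν : ν (Set.Icc a b)ᶜ = 0) :
    HasFPowerSeriesOnBall (fun t => ∫ s, (1 - t * q ^ (-s))⁻¹ ∂ν)
      (mkSeries fun n => ∫ s, (q ^ (-s)) ^ n ∂ν) 0 (ENNReal.ofReal (q ^ (b:ℝ))) :=
  hasFPB hb0 _ ((ν Set.univ).toReal) (fun n => moment_bound hq0 hq1 hν n)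
    (fun _ ht => hasSum_geom hq0 hq1 hν ht)

/-- Coefficients of the log-series of a signed measure. -/
noncomputable def cτ (q : ℝ) (σ : SignedMeasure ℝ) : ℕ → ℝ
  | 0 => 0
  | (k+1) =>
      ((∫ s, (q ^ (-s)) ^ (k+1) ∂σ.toJordanDecomposition.posPart)
        - ∫ s, (q ^ (-s)) ^ (k+1) ∂σ.toJordanDecomposition.negPart) / ((k:ℝ)+1)

@[simp] lemma cτ_zero (σ : SignedMeasure ℝ) : cτ q σ 0 = 0 := rfl

lemma cτ_succ (σ : SignedMeasure ℝ) (k : ℕ) :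
    cτ q σ (k+1) = ((∫ s, (q ^ (-s)) ^ (k+1) ∂σ.toJordanDecomposition.posPart)
      - ∫ s, (q ^ (-s)) ^ (k+1) ∂σ.toJordanDecomposition.negPart) / ((k:ℝ)+1) := rfl

lemma tau_supp (σ : SignedMeasure ℝ) (hσ : σ.totalVariation (Set.Icc a b)ᶜ = 0) :
    σ.toJordanDecomposition.posPart (Set.Icc a b)ᶜ = 0
      ∧ σ.toJordanDecomposition.negPart (Set.Icc a b)ᶜ = 0 := by
  have h := hσ
  rw [show σ.totalVariation
      = σ.toJordanDecomposition.posPart + σ.toJordanDecomposition.negPart from rfl,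
    Measure.add_apply, add_eq_zero] at h
  exact h

lemma tau_series (hq0 : 0 < q) (hq1 : q < 1) (hb0 : 0 < q ^ (b:ℝ))
    (σ : SignedMeasure ℝ) (hσ : σ.totalVariation (Set.Icc a b)ᶜ = 0) :
    HasFPowerSeriesOnBall (fun t => σ.intg fun s => Real.log (1 - t * q ^ (-s))⁻¹)
      (mkSeries (cτ q σ)) 0 (ENNReal.ofReal (q ^ (b:ℝ))) := by
  obtain ⟨hsp, hsn⟩ := tau_supp σ hσ
  apply hasFPB hb0 _ ((σ.toJordanDecomposition.posPart Set.univ).toReal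
    + (σ.toJordanDecomposition.negPart Set.univ).toReal)
  · intro n
    cases n with
    | zero => simp; positivity
    | succ k =>
      have h1 : |cτ q σ (k+1)|
          ≤ |∫ s, (q ^ (-s)) ^ (k+1) ∂σ.toJordanDecomposition.posPart|
            + |∫ s, (q ^ (-s)) ^ (k+1) ∂σ.toJordanDecomposition.negPart| := by
        rw [cτ_succ, abs_div, abs_of_pos (by positivity : (0:ℝ) < (k:ℝ)+1)]
        refine (div_le_self (abs_nonneg _) ?_).trans (abs_sub _ _)
        linarith [Nat.cast_nonneg (α := ℝ) k]
      calc |cτ q σ (k+1)| * (q ^ (b:ℝ)) ^ (k+1)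
          ≤ (|∫ s, (q ^ (-s)) ^ (k+1) ∂σ.toJordanDecomposition.posPart|
            + |∫ s, (q ^ (-s)) ^ (k+1) ∂σ.toJordanDecomposition.negPart|)
              * (q ^ (b:ℝ)) ^ (k+1) :=
            mul_le_mul_of_nonneg_right h1 (pow_nonneg hb0.le _)
        _ = |∫ s, (q ^ (-s)) ^ (k+1) ∂σ.toJordanDecomposition.posPart| * (q ^ (b:ℝ)) ^ (k+1)
            + |∫ s, (q ^ (-s)) ^ (k+1) ∂σ.toJordanDecomposition.negPart|
              * (q ^ (b:ℝ)) ^ (k+1) := by ring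
        _ ≤ _ := add_le_add (moment_bound hq0 hq1 hsp _) (moment_bound hq0 hq1 hsn _)
  · intro t ht
    have hs := (hasSum_log hq0 hq1 hsp ht).sub (hasSum_log hq0 hq1 hsn ht)
    have hfun : (fun n : ℕ =>
        (∫ s, (q ^ (-s)) ^ (n+1) ∂σ.toJordanDecomposition.posPart) / ((n:ℝ)+1) * t ^ (n+1)
          - (∫ s, (q ^ (-s)) ^ (n+1) ∂σ.toJordanDecomposition.negPart) / ((n:ℝ)+1) * t ^ (n+1))
        = fun n : ℕ => cτ q σ (n+1) * t ^ (n+1) := by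
      funext n
      rw [cτ_succ]
      ring
    rw [hfun] at hs
    have hfin := (hasSum_nat_add_iff (f := fun n => cτ q σ n * t ^ n) 1).mp hs
    simpa [MeasureTheory.SignedMeasure.intg] using hfin

end QMKAux

/-- Let `a < 0 < b` and `q ∈ (0,1)`. In the q-deformed Markov–Krein correspondence the
probability measure and the Rayleigh measure determine each other uniquely:
(1) if `(μ,τ)` and `(μ,τ')` are q-Markov–Krein related then `τ = τ'`;
(2) if `(μ,τ)` and `(μ',τ)` are q-Markov–Krein related then `μ = μ'`. -/
theorem stmt12 (a b : ℝ) (ha : a < 0) (hb : 0 < b) (q : ℝ) (hq : q ∈ Set.Ioo (0 : ℝ) 1)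
    (μ μ' : Measure ℝ) [IsProbabilityMeasure μ] [IsProbabilityMeasure μ']
    (hμ : μ (Set.Icc a b)ᶜ = 0) (hμ' : μ' (Set.Icc a b)ᶜ = 0)
    (τ τ' : MeasureTheory.SignedMeasure ℝ)
    (hτ : τ.totalVariation (Set.Icc a b)ᶜ = 0)
    (hτ' : τ'.totalVariation (Set.Icc a b)ᶜ = 0)
    (hτ1 : τ Set.univ = 1) (hτ'1 : τ' Set.univ = 1) :
    (qMarkovKrein b q μ τ → qMarkovKrein b q μ τ' → τ = τ') ∧
    (qMarkovKrein b q μ τ → qMarkovKrein b q μ' τ → μ = μ') := by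
  obtain ⟨hq0, hq1⟩ := hq
  have hb0 : 0 < q ^ (b:ℝ) := Real.rpow_pos_of_pos hq0 b
  have happ : ∀ (σ : MeasureTheory.SignedMeasure ℝ) {i : Set ℝ}, MeasurableSet i →
      σ i = (σ.toJordanDecomposition.posPart i).toReal
        - (σ.toJordanDecomposition.negPart i).toReal := by
    intro σ i hi
    conv_lhs => rw [← σ.toSignedMeasure_toJordanDecomposition]
    exact Measure.toSignedMeasure_sub_apply hi
  constructor
  · -- uniqueness of the Rayleigh measure
    intro h1 h2
    obtain ⟨hsp, hsn⟩ := QMKAux.tau_supp τ hτ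
    obtain ⟨hsp', hsn'⟩ := QMKAux.tau_supp τ' hτ'
    have hfp := QMKAux.tau_series hq0 hq1 hb0 τ hτ
    have hfp' := QMKAux.tau_series hq0 hq1 hb0 τ' hτ'
    have heq : ∀ t ∈ Set.Ioo (0:ℝ) (q ^ (b:ℝ)),
        (fun t => τ.intg fun s => Real.log (1 - t * q ^ (-s))⁻¹) t
          = (fun t => τ'.intg fun s => Real.log (1 - t * q ^ (-s))⁻¹) t := by
      intro t ht
      obtain ⟨x, hx, hxs⟩ := QMKAux.exists_x hq0 hq1 ht
      have hfeq : (fun s : ℝ => Real.log (1 - t * q ^ (-s))⁻¹)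
          = fun s : ℝ => Real.log (1 - q ^ (x - s))⁻¹ := by
        funext s; rw [← hxs s]
      show τ.intg _ = τ'.intg _
      rw [hfeq]
      exact Real.exp_injective ((h1 x hx).symm.trans (h2 x hx))
    have hcc : QMKAux.cτ q τ = QMKAux.cτ q τ' := QMKAux.coeff_eq hb0 hfp hfp' heq
    -- moments of the mixed sums agree
    have hmom : ∀ n : ℕ,
        ∫ s, (q ^ (-s)) ^ n ∂(τ.toJordanDecomposition.posPart
            + τ'.toJordanDecomposition.negPart)
          = ∫ s, (q ^ (-s)) ^ n ∂(τ'.toJordanDecomposition.posPart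
            + τ.toJordanDecomposition.negPart) := by
      intro n
      rw [integral_add_measure (QMKAux.int_pow hq0 hq1 hsp n) (QMKAux.int_pow hq0 hq1 hsn' n),
        integral_add_measure (QMKAux.int_pow hq0 hq1 hsp' n) (QMKAux.int_pow hq0 hq1 hsn n)]
      cases n with
      | zero =>
        have h0 : ∀ (κ : Measure ℝ) [IsFiniteMeasure κ],
            ∫ s, (q ^ (-s)) ^ 0 ∂κ = (κ Set.univ).toReal := by
          intro κ _
          simp
          rfl
        rw [h0, h0, h0, h0]
        have e1 := happ τ MeasurableSet.univ
        have e2 := happ τ' MeasurableSet.univ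
        rw [hτ1] at e1
        rw [hτ'1] at e2
        linarith
      | succ k =>
        have hck := congrFun hcc (k+1)
        rw [QMKAux.cτ_succ, QMKAux.cτ_succ] at hck
        have hk : ((k:ℝ)+1) ≠ 0 := by positivity
        have := (div_eq_div_iff hk hk).mp hck
        have h2' := mul_right_cancel₀ hk this
        linarith
    have hmeas : τ.toJordanDecomposition.posPart + τ'.toJordanDecomposition.negPart
        = τ'.toJordanDecomposition.posPart + τ.toJordanDecomposition.negPart := by
      apply QMKAux.meas_ext (a := a) (b := b) hq0 hq1 _ _ hmom
      · rw [Measure.add_apply, hsp, hsn', add_zero]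
      · rw [Measure.add_apply, hsp', hsn, add_zero]
    apply MeasureTheory.VectorMeasure.ext
    intro i hi
    have hii : τ.toJordanDecomposition.posPart i + τ'.toJordanDecomposition.negPart i
        = τ'.toJordanDecomposition.posPart i + τ.toJordanDecomposition.negPart i := by
      rw [← Measure.add_apply, ← Measure.add_apply, hmeas]
    have htr := congrArg ENNReal.toReal hii
    rw [ENNReal.toReal_add (measure_ne_top _ _) (measure_ne_top _ _),
      ENNReal.toReal_add (measure_ne_top _ _) (measure_ne_top _ _)] at htr
    rw [happ τ hi, happ τ' hi]
    linarith
  · -- uniqueness of the probability measure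
    intro h1 h2
    have hfp := QMKAux.mu_series hq0 hq1 hb0 μ hμ
    have hfp' := QMKAux.mu_series hq0 hq1 hb0 μ' hμ'
    have heq : ∀ t ∈ Set.Ioo (0:ℝ) (q ^ (b:ℝ)),
        (fun t => ∫ s, (1 - t * q ^ (-s))⁻¹ ∂μ) t
          = (fun t => ∫ s, (1 - t * q ^ (-s))⁻¹ ∂μ') t := by
      intro t ht
      obtain ⟨x, hx, hxs⟩ := QMKAux.exists_x hq0 hq1 ht
      have hfeq : (fun s : ℝ => (1 - t * q ^ (-s))⁻¹)
          = fun s : ℝ => (1 - q ^ (x - s))⁻¹ := by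
        funext s; rw [← hxs s]
      show (∫ s, (1 - t * q ^ (-s))⁻¹ ∂μ) = ∫ s, (1 - t * q ^ (-s))⁻¹ ∂μ'
      rw [hfeq]
      rw [h1 x hx, h2 x hx]
    have hcc := QMKAux.coeff_eq hb0 hfp hfp' heq
    exact QMKAux.meas_ext hq0 hq1 hμ hμ' fun n => congrFun hcc n
end

section
/- Let D ⊆ ℝ × (0,∞) be an open set and let r : D → ℝ be differentiable. Suppose that for all (u,ϱ) ∈ D the implicit equation r(u,ϱ)·(1 − e^{−ϱ(u − r(u,ϱ))}) = ϱ holds, and that r(u,ϱ)²·e^{−ϱ(u − r(u,ϱ))} ≠ 1 on D. Then r satisfies the quasi-linear partial differential equation 2r·∂r/∂u − u·∂r/∂u + ϱ·∂r/∂ϱ = r on D. -/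
/-- Let `D ⊆ ℝ × (0,∞)` be open and `r : D → ℝ` differentiable, satisfying the implicit
equation `r·(1 − e^{−ϱ(u − r)}) = ϱ` with `r²·e^{−ϱ(u − r)} ≠ 1` on `D`. Then `r` satisfies
the quasi-linear PDE `2r·∂r/∂u − u·∂r/∂u + ϱ·∂r/∂ϱ = r` on `D`. Here a point of `D` is
`p = (u, ϱ)`, and `∂r/∂u`, `∂r/∂ϱ` are `fderiv ℝ r p (1,0)`, `fderiv ℝ r p (0,1)`. -/
theorem stmt14 (D : Set (ℝ × ℝ)) (hD : IsOpen D) (hDpos : ∀ p ∈ D, 0 < p.2)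
    (r : ℝ × ℝ → ℝ) (hr : ∀ p ∈ D, DifferentiableAt ℝ r p)
    (heq : ∀ p ∈ D, r p * (1 - Real.exp (-p.2 * (p.1 - r p))) = p.2)
    (hnd : ∀ p ∈ D, r p ^ 2 * Real.exp (-p.2 * (p.1 - r p)) ≠ 1) :
    ∀ p ∈ D,
      2 * r p * fderiv ℝ r p (1, 0) - p.1 * fderiv ℝ r p (1, 0)
        + p.2 * fderiv ℝ r p (0, 1) = r p := by
  intro p hp
  have hrf : HasFDerivAt r (fderiv ℝ r p) p := (hr p hp).hasFDerivAt
  -- derivative of the inner function q ↦ -q.2 * (q.1 - r q)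
  have h1 := (hasFDerivAt_snd (𝕜 := ℝ) (E := ℝ) (F := ℝ) (p := p)).neg.mul
      ((hasFDerivAt_fst (𝕜 := ℝ) (E := ℝ) (F := ℝ) (p := p)).sub hrf)
  have h2 := h1.exp
  have h3 := h2.const_sub 1
  have h4 := hrf.mul h3
  have h5 := h4.sub (hasFDerivAt_snd (𝕜 := ℝ) (E := ℝ) (F := ℝ) (p := p))
  have hgg : (fun q : ℝ × ℝ => r q * (1 - Real.exp (-q.2 * (q.1 - r q))) - q.2)
      =ᶠ[nhds p] fun _ => (0:ℝ) :=
    Filter.eventually_of_mem (hD.mem_nhds hp) fun q hq => sub_eq_zero_of_eq (heq q hq)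
  have hG : fderiv ℝ (fun q : ℝ × ℝ => r q * (1 - Real.exp (-q.2 * (q.1 - r q))) - q.2) p = _ :=
    h5.fderiv
  rw [hgg.fderiv_eq, fderiv_fun_const] at hG
  have e1 := DFunLike.congr_fun hG ((1:ℝ), (0:ℝ))
  have e2 := DFunLike.congr_fun hG ((0:ℝ), (1:ℝ))
  simp only [ContinuousLinearMap.add_apply, ContinuousLinearMap.sub_apply,
    ContinuousLinearMap.smul_apply, ContinuousLinearMap.coe_fst', ContinuousLinearMap.coe_snd',
    ContinuousLinearMap.neg_apply, Pi.zero_apply, ContinuousLinearMap.zero_apply,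
    smul_eq_mul, Pi.neg_apply, Pi.sub_apply, Pi.mul_apply] at e1 e2
  set R := r p with hR
  set E := Real.exp (-p.2 * (p.1 - r p)) with hE
  set ru := (fderiv ℝ r p) ((1:ℝ), (0:ℝ)) with hru
  set rr := (fderiv ℝ r p) ((0:ℝ), (1:ℝ)) with hrr
  have heqp := heq p hp
  have hRd : R * (1 - E - R * p.2 * E) = p.2 * (1 - R ^ 2 * E) := by
    linear_combination heqp
  have hne : p.2 * (1 - R ^ 2 * E) ≠ 0 :=
    mul_ne_zero (hDpos p hp).ne' (sub_ne_zero_of_ne (Ne.symm (hnd p hp)))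
  have hd : (1 - E - R * p.2 * E) ≠ 0 := by
    intro h
    apply hne
    rw [← hRd, h, mul_zero]
  have key : (2 * R * ru - p.1 * ru + p.2 * rr - R) * (1 - E - R * p.2 * E) = 0 := by
    linear_combination (-(2 * R - p.1)) * e1 + (-p.2) * e2 + (-1 : ℝ) * heqp
  rcases mul_eq_zero.mp key with h | h
  · linarith
  · exact absurd h hd
end

section
/- For all fixed real numbers x and r, lim_{q → 1⁻} (1 − q^{x − r·ln(q^{−1})/(1−q)})/(1 − q) = x − r. Consequently, as q → 1 the equation r·(1 − q^{x − (ln q^{−1}/(1−q))·r}) = 1 − q characterizing the q-deformed limit shape reduces to the equation r·(x − r) = 1 characterizing the R-function of the Vershik–Kerov–Logan–Shepp limit shape Ω. -/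
open Real Filter Set

noncomputable def expRatio (t : ℝ) : ℝ := if t = 0 then 1 else (Real.exp t - 1) / t

lemma expRatio_tendsto : Filter.Tendsto expRatio (nhds 0) (nhds 1) := by
  rw [← nhdsNE_sup_pure (0 : ℝ)]
  refine Filter.Tendsto.sup ?_ ?_
  · have h : Filter.Tendsto (slope Real.exp 0) (nhdsWithin 0 {(0:ℝ)}ᶜ) (nhds 1) := by
      have := (Real.hasDerivAt_exp 0)
      rw [Real.exp_zero] at this
      exact hasDerivAt_iff_tendsto_slope.mp this
    refine h.congr' ?_
    filter_upwards [self_mem_nhdsWithin] with t ht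
    simp only [Set.mem_compl_iff, Set.mem_singleton_iff] at ht
    simp [expRatio, ht, slope_def_field, Real.exp_zero]
  · have : expRatio 0 = 1 := by simp [expRatio]
    rw [← this]
    exact tendsto_pure_nhds _ _

lemma one_sub_exp (t : ℝ) : 1 - Real.exp t = -t * expRatio t := by
  unfold expRatio
  by_cases ht : t = 0
  · simp [ht]
  · rw [if_neg ht]
    field_simp
    ring

/-- For all fixed reals `x` and `r`,
`lim_{q → 1⁻} (1 − q^{x − r·ln(q⁻¹)/(1−q)})/(1 − q) = x − r`
(the limit being taken over `q ∈ (0,1)` tending to `1`). Consequently, as `q → 1` the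
equation `r(1 − q^{x − (ln q⁻¹/(1−q))r}) = 1 − q` characterizing the q-deformed limit shape
reduces to `r(x − r) = 1`, the equation for the R-function of the limit shape `Ω`. -/
theorem stmt15 (x r : ℝ) :
    Filter.Tendsto
      (fun q : ℝ => (1 - q ^ (x - r * Real.log q⁻¹ / (1 - q))) / (1 - q))
      (nhdsWithin 1 (Set.Ioo (0 : ℝ) 1)) (nhds (x - r)) := by
  set F := nhdsWithin (1 : ℝ) (Set.Ioo (0 : ℝ) 1)
  set L : ℝ → ℝ := fun q => Real.log q / (1 - q) with hLdef
  set u : ℝ → ℝ := fun q => Real.log q * (x + r * L q) with hudef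
  have hFle : F ≤ nhdsWithin (1 : ℝ) {(1:ℝ)}ᶜ := by
    apply nhdsWithin_mono
    intro q hq
    exact ne_of_lt hq.2
  have hL : Filter.Tendsto L F (nhds (-1)) := by
    have hslope : Filter.Tendsto (slope Real.log 1) (nhdsWithin 1 {(1:ℝ)}ᶜ) (nhds 1) := by
      have := Real.hasDerivAt_log (one_ne_zero)
      rw [show (1:ℝ)⁻¹ = 1 by norm_num] at this
      exact hasDerivAt_iff_tendsto_slope.mp this
    have : Filter.Tendsto (fun q => -(slope Real.log 1 q)) (nhdsWithin 1 {(1:ℝ)}ᶜ)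
        (nhds (-1)) := hslope.neg
    refine (this.mono_left hFle).congr' ?_
    filter_upwards [self_mem_nhdsWithin] with q hq
    have hq1 : q ≠ 1 := ne_of_lt hq.2
    simp only [slope_def_field, Real.log_one, sub_zero, hLdef]
    rw [show (1:ℝ) - q = -(q - 1) by ring, div_neg]
  have hlog : Filter.Tendsto Real.log F (nhds 0) := by
    have := (Real.continuousAt_log (one_ne_zero)).tendsto
    rw [Real.log_one] at this
    exact this.mono_left nhdsWithin_le_nhds
  have hu : Filter.Tendsto u F (nhds 0) := by
    have h := hlog.mul ((tendsto_const_nhds : Filter.Tendsto (fun _ : ℝ => x) F (nhds x)).add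
      (hL.const_mul r))
    rw [zero_mul] at h
    exact h
  have hA : Filter.Tendsto (fun q => -(L q) * (x + r * L q)) F (nhds (x - r)) := by
    have h := (hL.neg).mul ((tendsto_const_nhds : Filter.Tendsto (fun _ : ℝ => x) F (nhds x)).add
      (hL.const_mul r))
    have : -(-1 : ℝ) * (x + r * (-1)) = x - r := by ring
    rwa [this] at h
  have hE : Filter.Tendsto (fun q => expRatio (u q)) F (nhds 1) :=
    expRatio_tendsto.comp hu
  have hmain : Filter.Tendsto (fun q => (-(L q) * (x + r * L q)) * expRatio (u q)) F
      (nhds ((x - r) * 1)) := hA.mul hE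
  rw [mul_one] at hmain
  refine hmain.congr' ?_
  filter_upwards [self_mem_nhdsWithin] with q hq
  have hq0 : 0 < q := hq.1
  have hq1 : q ≠ 1 := ne_of_lt hq.2
  have hrpow : q ^ (x - r * Real.log q⁻¹ / (1 - q)) = Real.exp (u q) := by
    rw [Real.rpow_def_of_pos hq0, Real.log_inv, hudef]
    congr 1
    simp only [hLdef]
    ring
  rw [hrpow, one_sub_exp, hudef]
  have h1q : (1 : ℝ) - q ≠ 0 := by
    intro h
    apply hq1
    linarith
  simp only [hLdef]
  field_simp
end

section
/- Fix q ∈ (0,1) and interlacing real numbers x₁ < y₁ < ⋯ < y_m < x_{m+1}, with associated weights μ_k = μ_k(q), k = 1,…,m+1. Fix a real x > x_{m+1}, and for t ≥ 0 small enough that x > x_{m+1} + √(μ_k t) for all k, define R(t) = (1−q) · Π_{i=1}^{m+1}(1 − q^{x−x_i}) · Π_{i=1}^{m}(1 − q^{x−y_i}) / Π_{i=1}^{m+1}[ (1 − q^{x−x_i−√(μ_i t)})·(1 − q^{x−x_i+√(μ_i t)}) ]. Then R has a right derivative at t = 0 given by R'(0⁺) = (ln q)² · ( Σ_{k=1}^{m+1}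 μ_k·q^{x−x_k}/(1 − q^{x−x_k})² ) · R(0), and moreover d/dx[R(0)] + ((1−q)/ln(q^{−1})) · R(0)^{−1} · R'(0⁺) = 0; that is, the q-deformed R-function of a growing rectangular diagram satisfies the q-deformed Burgers equation infinitesimally at t = 0. -/
open Finset

/-- The q-deformed R-function of the rectangular diagram grown for time `t`: above each
minimum `x_k` a square of area `μ_k(q)·t` is attached, giving
`R(X,t) = (1−q)·Π(1 − q^{X−x_i})·Π(1 − q^{X−y_i}) /
Π[(1 − q^{X−x_i−√(μ_i t)})(1 − q^{X−x_i+√(μ_i t)})]`. -/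
noncomputable def Rgrow (q : ℝ) (m : ℕ) (x y : ℕ → ℝ) (X t : ℝ) : ℝ :=
  (1 - q) * (∏ i ∈ Finset.Icc 1 (m + 1), (1 - q ^ (X - x i))) *
      (∏ i ∈ Finset.Icc 1 m, (1 - q ^ (X - y i))) /
    ∏ i ∈ Finset.Icc 1 (m + 1),
      ((1 - q ^ (X - x i - Real.sqrt (muW q m x y i * t))) *
        (1 - q ^ (X - x i + Real.sqrt (muW q m x y i * t))))


open Real Set Filter Topology

lemma split0 (A P R C : ℝ) (hP : P ≠ 0) (hR : R ≠ 0) (hC : C ≠ 0)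
    (hAP : 1 - A/P ≠ 0) (hAR : 1 - A/R ≠ 0) (hPR : P ≠ R) :
    (1 - A/C) / ((1 - A/P) * (1 - A/R)) =
      (1 - P/C)/(1 - P/R) / (1 - A/P) + (1 - R/C)/(1 - R/P) / (1 - A/R) := by
  have h1 : 1 - P/R ≠ 0 := by
    intro h; apply hPR; field_simp at h; linarith
  have h2 : 1 - R/P ≠ 0 := by
    intro h; apply hPR; field_simp at h; linarith
  have key : (1 - P/C)/(1 - P/R) * (1 - A/R) + (1 - R/C)/(1 - R/P) * (1 - A/P)
      = 1 - A/C := by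
    rw [div_mul_eq_mul_div, div_mul_eq_mul_div, div_add_div _ _ h1 h2]
    rw [div_eq_iff (mul_ne_zero h1 h2)]
    field_simp
    ring
  rw [div_add_div _ _ hAP hAR, ← key]
  ring_nf


section helpers
variable {q : ℝ} {m : ℕ} {x y : ℕ → ℝ}

lemma xmono (hxy : ∀ i, 1 ≤ i → i ≤ m → x i < y i)
    (hyx : ∀ i, 1 ≤ i → i ≤ m → y i < x (i + 1)) :
    ∀ j, j ≤ m + 1 → ∀ i, 1 ≤ i → i < j → x i < x j := by
  have step : ∀ i, 1 ≤ i → i ≤ m → x i < x (i + 1) :=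
    fun i h1 h2 => (hxy i h1 h2).trans (hyx i h1 h2)
  intro j
  induction j with
  | zero => omega
  | succ n ih =>
    intro hj i h1 hij
    rcases eq_or_lt_of_le (Nat.lt_succ_iff.mp hij) with h | h
    · subst h; exact step i h1 (by omega)
    · exact (ih (by omega) i h1 h).trans (step n (by omega) (by omega))

lemma xylt (hxy : ∀ i, 1 ≤ i → i ≤ m → x i < y i)
    (hyx : ∀ i, 1 ≤ i → i ≤ m → y i < x (i + 1)) :
    ∀ i j, 1 ≤ i → i ≤ j → j ≤ m → x i < y j := by
  intro i j h1 hij hj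
  rcases eq_or_lt_of_le hij with h | h
  · subst h; exact hxy i h1 hj
  · exact (xmono hxy hyx j (by omega) i h1 h).trans (hxy j (by omega) hj)

lemma yxlt (hxy : ∀ i, 1 ≤ i → i ≤ m → x i < y i)
    (hyx : ∀ i, 1 ≤ i → i ≤ m → y i < x (i + 1)) :
    ∀ i j, 1 ≤ i → i < j → j ≤ m + 1 → i ≤ m → y i < x j := by
  intro i j h1 hij hj him
  rcases eq_or_lt_of_le (Nat.succ_le_of_lt hij) with h | h
  · rw [← h]; exact hyx i h1 him
  · exact (hyx i h1 him).trans (xmono hxy hyx j hj (i+1) (by omega) h)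

lemma one_sub_rpow_pos (hq : q ∈ Set.Ioo (0:ℝ) 1) {t : ℝ} (ht : 0 < t) :
    0 < 1 - q ^ t :=
  sub_pos.2 (Real.rpow_lt_one hq.1.le hq.2 ht)

lemma one_sub_rpow_neg (hq : q ∈ Set.Ioo (0:ℝ) 1) {t : ℝ} (ht : t < 0) :
    1 - q ^ t < 0 :=
  sub_neg.2 ((Real.one_lt_rpow_iff_of_pos hq.1).2 (Or.inr ⟨hq.2, ht⟩))

lemma mu_pos (hq : q ∈ Set.Ioo (0:ℝ) 1)
    (hxy : ∀ i, 1 ≤ i → i ≤ m → x i < y i)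
    (hyx : ∀ i, 1 ≤ i → i ≤ m → y i < x (i + 1)) :
    ∀ k, 1 ≤ k → k ≤ m + 1 → 0 < muW q m x y k := by
  intro k h1 hk
  unfold muW
  apply mul_pos
  · apply Finset.prod_pos
    intro i hi
    rw [Finset.mem_Icc] at hi
    have hik : i < k := by omega
    apply div_pos
    · exact one_sub_rpow_pos hq (sub_pos.2 (yxlt hxy hyx i k hi.1 hik hk (by omega)))
    · exact one_sub_rpow_pos hq (sub_pos.2 (xmono hxy hyx k hk i hi.1 hik))
  · apply Finset.prod_pos
    intro i hi
    rw [Finset.mem_Icc] at hi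
    have h1i : k + 1 ≤ i := hi.1
    have hnum : x k < y (i - 1) := xylt hxy hyx k (i-1) h1 (by omega) (by omega)
    have hden : x k < x i := xmono hxy hyx i hi.2 k h1 (by omega)
    have hn := one_sub_rpow_neg hq (sub_neg.2 hnum)
    have hd := one_sub_rpow_neg hq (sub_neg.2 hden)
    exact div_pos_of_neg_of_neg hn hd

lemma rpow_ne_one (hq : q ∈ Set.Ioo (0:ℝ) 1) {t : ℝ} (ht : 0 < t) : q ^ t ≠ 1 :=
  ne_of_lt (Real.rpow_lt_one hq.1.le hq.2 ht)

end helpers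

lemma pf (q : ℝ) (hq : q ∈ Set.Ioo (0:ℝ) 1) :
    ∀ (m : ℕ) (x y : ℕ → ℝ),
      (∀ i, 1 ≤ i → i ≤ m → x i < y i) →
      (∀ i, 1 ≤ i → i ≤ m → y i < x (i + 1)) →
      ∀ X : ℝ, x (m + 1) < X →
      (∏ i ∈ Finset.Icc 1 m, (1 - q ^ (X - y i))) /
          (∏ i ∈ Finset.Icc 1 (m + 1), (1 - q ^ (X - x i)))
        = ∑ k ∈ Finset.Icc 1 (m + 1), muW q m x y k / (1 - q ^ (X - x k)) := by
  have hq0 : (0:ℝ) < q := hq.1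
  intro m
  induction m with
  | zero =>
    intro x y _ _ X hX
    simp [muW]
  | succ n ih =>
    intro x y hxy hyx X hX
    -- basic inequalities
    have hxn2X : x (n + 2) < X := hX
    have hxltn2 : ∀ i, 1 ≤ i → i ≤ n + 1 → x i < x (n + 2) :=
      fun i h1 h2 => xmono hxy hyx (n+2) (le_refl _) i h1 (by omega)
    have hxiX : ∀ i, 1 ≤ i → i ≤ n + 2 → x i < X := by
      intro i h1 h2
      rcases eq_or_lt_of_le h2 with h | h
      · rw [show i = n + 2 by omega]; exact hX
      · exact (hxltn2 i h1 (by omega)).trans hX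
    -- nonvanishing
    have hne : ∀ i, 1 ≤ i → i ≤ n + 2 → 1 - q ^ (X - x i) ≠ 0 :=
      fun i h1 h2 => ne_of_gt (one_sub_rpow_pos hq (sub_pos.2 (hxiX i h1 h2)))
    have hne2 : ∀ i, 1 ≤ i → i ≤ n + 1 → 1 - q ^ (x (n+2) - x i) ≠ 0 :=
      fun i h1 h2 => ne_of_gt (one_sub_rpow_pos hq (sub_pos.2 (hxltn2 i h1 h2)))
    -- restricted hypotheses
    have hxy' : ∀ i, 1 ≤ i → i ≤ n → x i < y i := fun i h1 h2 => hxy i h1 (by omega)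
    have hyx' : ∀ i, 1 ≤ i → i ≤ n → y i < x (i + 1) := fun i h1 h2 => hyx i h1 (by omega)
    have ihX := ih x y hxy' hyx' X ((hxltn2 (n+1) (by omega) (le_refl _)).trans hX)
    have ihx := ih x y hxy' hyx' (x (n + 2)) (hxltn2 (n+1) (by omega) (le_refl _))
    -- muW recursion for k ≤ n+1
    have hmu : ∀ k, k ≤ n + 1 → muW q (n+1) x y k
        = muW q n x y k * ((1 - q ^ (x k - y (n+1))) / (1 - q ^ (x k - x (n+2)))) := by
      intro k hk
      unfold muW
      rw [show n + 1 + 1 = n + 2 from rfl,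
        Finset.prod_Icc_succ_top (show k + 1 ≤ n + 2 by omega)]
      simp only [show n + 2 - 1 = n + 1 from rfl]
      ring
    -- muW top value
    have hmutop : muW q (n+1) x y (n+2)
        = ∏ i ∈ Finset.Icc 1 (n+1), ((1 - q ^ (x (n+2) - y i)) / (1 - q ^ (x (n+2) - x i))) := by
      unfold muW
      rw [show n + 2 - 1 = n + 1 from rfl, Finset.Icc_eq_empty (by omega : ¬ (n+2+1 ≤ n+1+1))]
      simp
    -- now the main computation
    rw [Finset.prod_Icc_succ_top (show 1 ≤ n+1 by omega),
        Finset.prod_Icc_succ_top (show 1 ≤ n+1+1 by omega),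
        Finset.sum_Icc_succ_top (show 1 ≤ n+1+1 by omega),
        ← div_mul_div_comm, ihX]
    have hsum : (∑ k ∈ Finset.Icc 1 (n+1), muW q n x y k / (1 - q ^ (X - x k))) *
          ((1 - q ^ (X - y (n+1))) / (1 - q ^ (X - x (n+1+1))))
        = ∑ k ∈ Finset.Icc 1 (n+1),
            (muW q (n+1) x y k / (1 - q ^ (X - x k)) +
              (muW q n x y k * ((1 - q ^ (x (n+1+1) - y (n+1))) / (1 - q ^ (x (n+1+1) - x k)))) /
                (1 - q ^ (X - x (n+1+1)))) := by
      rw [Finset.sum_mul]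
      refine Finset.sum_congr rfl ?_
      intro k hk
      rw [Finset.mem_Icc] at hk
      rw [hmu k hk.2]
      have hPne : (q:ℝ) ^ (x k) ≠ 0 := (Real.rpow_pos_of_pos hq0 _).ne'
      have hRne : (q:ℝ) ^ (x (n+2)) ≠ 0 := (Real.rpow_pos_of_pos hq0 _).ne'
      have hCne : (q:ℝ) ^ (y (n+1)) ≠ 0 := (Real.rpow_pos_of_pos hq0 _).ne'
      have hAP : 1 - q ^ X / q ^ (x k) ≠ 0 := by
        have := hne k hk.1 (by omega)
        rwa [Real.rpow_sub hq0] at this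
      have hAR : 1 - q ^ X / q ^ (x (n+2)) ≠ 0 := by
        have := hne (n+2) (by omega) (by omega)
        rwa [Real.rpow_sub hq0] at this
      have hPR : (q:ℝ) ^ (x k) ≠ q ^ (x (n+2)) :=
        (Real.rpow_lt_rpow_of_exponent_gt hq0 hq.2 (hxltn2 k hk.1 hk.2)).ne'
      have hs := split0 (q ^ X) (q ^ (x k)) (q ^ (x (n+2))) (q ^ (y (n+1)))
        hPne hRne hCne hAP hAR hPR
      rw [← div_div] at hs
      simp only [Real.rpow_sub hq0]
      linear_combination (muW q n x y k) * hs
    rw [hsum, Finset.sum_add_distrib, ← Finset.sum_div]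
    congr 2
    calc ∑ k ∈ Finset.Icc 1 (n+1),
            muW q n x y k * ((1 - q ^ (x (n+1+1) - y (n+1))) / (1 - q ^ (x (n+1+1) - x k)))
        = (1 - q ^ (x (n+1+1) - y (n+1))) *
            ∑ k ∈ Finset.Icc 1 (n+1), muW q n x y k / (1 - q ^ (x (n+1+1) - x k)) := by
          rw [Finset.mul_sum]
          exact Finset.sum_congr rfl (fun k _ => by ring)
      _ = (1 - q ^ (x (n+1+1) - y (n+1))) *
            ((∏ i ∈ Finset.Icc 1 n, (1 - q ^ (x (n+1+1) - y i))) /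
              (∏ i ∈ Finset.Icc 1 (n+1), (1 - q ^ (x (n+1+1) - x i)))) := by rw [ihx]
      _ = (∏ i ∈ Finset.Icc 1 (n+1), (1 - q ^ (x (n+1+1) - y i))) /
            (∏ i ∈ Finset.Icc 1 (n+1), (1 - q ^ (x (n+1+1) - x i))) := by
          rw [Finset.prod_Icc_succ_top (f := fun i => 1 - q ^ (x (n+1+1) - y i))
            (show 1 ≤ n+1 by omega)]
          ring
      _ = muW q (n+1) x y (n+1+1) := by rw [hmutop, Finset.prod_div_distrib]

noncomputable def gfun (q : ℝ) (m : ℕ) (x y : ℕ → ℝ) (X : ℝ) (i : ℕ) (t : ℝ) : ℝ :=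
  1 + q ^ (2 * (X - x i)) -
    2 * q ^ (X - x i) * Real.cosh (Real.sqrt (muW q m x y i * (Real.log q) ^ 2 * t))

lemma expand_pair {q : ℝ} (hq0 : 0 < q) (a s : ℝ) :
    (1 - q ^ (a - s)) * (1 - q ^ (a + s))
      = 1 + q ^ (2 * a) - 2 * q ^ a * Real.cosh (s * Real.log q) := by
  rw [Real.rpow_def_of_pos hq0 (a - s), Real.rpow_def_of_pos hq0 (a + s),
    Real.rpow_def_of_pos hq0 (2 * a), Real.rpow_def_of_pos hq0 a, Real.cosh_eq]
  have e1 : Real.exp (Real.log q * (a - s))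
      = Real.exp (Real.log q * a) * Real.exp (-(s * Real.log q)) := by
    rw [← Real.exp_add]; congr 1; ring
  have e2 : Real.exp (Real.log q * (a + s))
      = Real.exp (Real.log q * a) * Real.exp (s * Real.log q) := by
    rw [← Real.exp_add]; congr 1; ring
  have e3 : Real.exp (Real.log q * (2 * a))
      = Real.exp (Real.log q * a) * Real.exp (Real.log q * a) := by
    rw [← Real.exp_add]; congr 1; ring
  have e4 : Real.exp (-(s * Real.log q)) * Real.exp (s * Real.log q) = 1 := by
    rw [← Real.exp_add]; simp
  rw [e1, e2, e3]
  linear_combination (Real.exp (Real.log q * a)) ^ 2 * e4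

lemma gfun_eq {q : ℝ} (hq0 : 0 < q) {m : ℕ} {x y : ℕ → ℝ} {X : ℝ} {i : ℕ}
    (hμ : 0 ≤ muW q m x y i) {t : ℝ} (ht : 0 ≤ t) :
    (1 - q ^ (X - x i - Real.sqrt (muW q m x y i * t))) *
      (1 - q ^ (X - x i + Real.sqrt (muW q m x y i * t))) = gfun q m x y X i t := by
  have hμt : 0 ≤ muW q m x y i * t := mul_nonneg hμ ht
  have hsq : Real.sqrt (muW q m x y i * (Real.log q) ^ 2 * t)
      = Real.sqrt (muW q m x y i * t) * |Real.log q| := by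
    rw [show muW q m x y i * (Real.log q) ^ 2 * t
        = (muW q m x y i * t) * (Real.log q) ^ 2 by ring,
      Real.sqrt_mul hμt, Real.sqrt_sq_eq_abs]
  have hcosh : Real.cosh (Real.sqrt (muW q m x y i * (Real.log q) ^ 2 * t))
      = Real.cosh (Real.sqrt (muW q m x y i * t) * Real.log q) := by
    rw [hsq, ← Real.cosh_abs (Real.sqrt (muW q m x y i * t) * Real.log q), abs_mul,
      abs_of_nonneg (Real.sqrt_nonneg _)]
  rw [gfun, hcosh]
  exact expand_pair hq0 (X - x i) (Real.sqrt (muW q m x y i * t))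

lemma gfun_zero {q : ℝ} (hq0 : 0 < q) {m : ℕ} {x y : ℕ → ℝ} {X : ℝ} (i : ℕ) :
    gfun q m x y X i 0 = (1 - q ^ (X - x i)) ^ 2 := by
  rw [gfun, mul_zero, Real.sqrt_zero, Real.cosh_zero, two_mul, Real.rpow_add hq0]
  ring

lemma coshSqrt_deriv : HasDerivWithinAt (fun t : ℝ => Real.cosh (Real.sqrt t)) (1/2) (Set.Ici 0) 0 := by
  rw [hasDerivWithinAt_iff_tendsto_slope, Set.Ici_sdiff_left]
  have h1 : Tendsto (fun u : ℝ => Real.sinh u / u) (𝓝[≠] 0) (𝓝 1) := by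
    have h := (Real.hasDerivAt_sinh 0)
    rw [hasDerivAt_iff_tendsto_slope] at h
    simp only [Real.cosh_zero] at h
    refine h.congr ?_
    intro u; simp [slope_def_field, Real.sinh_zero]
  have h2 : Tendsto (fun t : ℝ => Real.sqrt t / 2) (𝓝[>] (0:ℝ)) (𝓝[≠] (0:ℝ)) := by
    apply tendsto_nhdsWithin_of_tendsto_nhds_of_eventually_within
    · have : Tendsto (fun t : ℝ => Real.sqrt t / 2) (𝓝 0) (𝓝 (Real.sqrt 0 / 2)) :=
        (Real.continuous_sqrt.tendsto 0).div_const 2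
      simpa using this.mono_left nhdsWithin_le_nhds
    · filter_upwards [self_mem_nhdsWithin] with t ht
      have : 0 < Real.sqrt t := Real.sqrt_pos.2 ht
      simp only [Set.mem_compl_iff, Set.mem_singleton_iff]
      positivity
  have h3 : Tendsto (fun t : ℝ => (1/2) * (Real.sinh (Real.sqrt t / 2) / (Real.sqrt t / 2))^2)
      (𝓝[>] (0:ℝ)) (𝓝 (1/2)) := by
    have := ((h1.comp h2).pow 2).const_mul (1/2 : ℝ)
    simpa using this
  refine h3.congr' ?_
  filter_upwards [self_mem_nhdsWithin] with t ht
  have ht0 : (0:ℝ) < t := ht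
  have hs : 0 < Real.sqrt t := Real.sqrt_pos.2 ht0
  have hts : Real.sqrt t ^ 2 = t := Real.sq_sqrt ht0.le
  have hch : Real.cosh (Real.sqrt t) = 2 * Real.sinh (Real.sqrt t / 2)^2 + 1 := by
    have h2u : Real.sqrt t = 2 * (Real.sqrt t / 2) := by ring
    rw [h2u, Real.cosh_two_mul, Real.cosh_sq]; ring
  have : slope (fun t : ℝ => Real.cosh (Real.sqrt t)) 0 t
      = (Real.cosh (Real.sqrt t) - 1) / t := by
    simp [slope_def_field]
  rw [this, hch]
  field_simp
  nlinarith [hts, sq_nonneg (Real.sinh (Real.sqrt t / 2))]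

lemma coshSqrtMul_deriv {c : ℝ} (hc : 0 ≤ c) :
    HasDerivWithinAt (fun t : ℝ => Real.cosh (Real.sqrt (c * t))) (c/2) (Set.Ici 0) 0 := by
  have hf : HasDerivWithinAt (fun t : ℝ => c * t) c (Set.Ici 0) 0 :=
    ((hasDerivAt_id (0:ℝ)).const_mul c).hasDerivWithinAt.congr_deriv (by simp)
  have hmap : Set.MapsTo (fun t : ℝ => c * t) (Set.Ici 0) (Set.Ici 0) := by
    intro t ht; exact Set.mem_Ici.2 (mul_nonneg hc ht)
  have hg : HasDerivWithinAt (fun s : ℝ => Real.cosh (Real.sqrt s)) (1/2) (Set.Ici 0)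
      ((fun t : ℝ => c * t) 0) := by
    simpa using coshSqrt_deriv
  have := hg.comp (0:ℝ) hf hmap
  exact this.congr_deriv (by ring)

lemma gfun_hasDeriv {q : ℝ} (hq0 : 0 < q) {m : ℕ} {x y : ℕ → ℝ} {X : ℝ} {i : ℕ}
    (hμ : 0 ≤ muW q m x y i) :
    HasDerivWithinAt (gfun q m x y X i)
      (-(q ^ (X - x i) * (Real.log q) ^ 2 * muW q m x y i)) (Set.Ici 0) 0 := by
  have hc : 0 ≤ muW q m x y i * (Real.log q) ^ 2 := mul_nonneg hμ (sq_nonneg _)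
  have h := ((coshSqrtMul_deriv hc).const_mul (2 * q ^ (X - x i))).const_sub
    (1 + q ^ (2 * (X - x i)))
  refine h.congr_deriv ?_
  ring


/-- For a growing rectangular diagram with interlacing data
`x₁ < y₁ < ⋯ < y_m < x_{m+1}`, weights `μ_k(q)`, and `X > x_{m+1}`, the function
`t ↦ R(X,t)` has right derivative at `t = 0` equal to
`(ln q)²·(Σ_k μ_k q^{X−x_k}/(1 − q^{X−x_k})²)·R(X,0)`, and moreover
`d/dX[R(X,0)] + ((1−q)/ln(q⁻¹))·R(X,0)⁻¹·R'(0⁺) = 0`: the q-deformed R-function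
satisfies the q-deformed Burgers equation infinitesimally at `t = 0`. -/
theorem stmt18 (q : ℝ) (hq : q ∈ Set.Ioo (0 : ℝ) 1) (m : ℕ) (x y : ℕ → ℝ)
    (hxy : ∀ i, 1 ≤ i → i ≤ m → x i < y i)
    (hyx : ∀ i, 1 ≤ i → i ≤ m → y i < x (i + 1))
    (X : ℝ) (hX : x (m + 1) < X) :
    HasDerivWithinAt (fun t => Rgrow q m x y X t)
      ((Real.log q) ^ 2 *
          (∑ k ∈ Finset.Icc 1 (m + 1),
            muW q m x y k * q ^ (X - x k) / (1 - q ^ (X - x k)) ^ 2) *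
        Rgrow q m x y X 0)
      (Set.Ici (0 : ℝ)) 0 ∧
    deriv (fun X' => Rgrow q m x y X' 0) X
        + (1 - q) / Real.log q⁻¹ * (Rgrow q m x y X 0)⁻¹ *
            ((Real.log q) ^ 2 *
                (∑ k ∈ Finset.Icc 1 (m + 1),
                  muW q m x y k * q ^ (X - x k) / (1 - q ^ (X - x k)) ^ 2) *
              Rgrow q m x y X 0)
      = 0 := by
  obtain ⟨hq0, hq1⟩ := hq
  have hq' : q ∈ Set.Ioo (0:ℝ) 1 := ⟨hq0, hq1⟩
  have hL : Real.log q < 0 := Real.log_neg hq0 hq1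
  have hL0 : Real.log q ≠ 0 := hL.ne
  -- basic inequalities
  have hxiX : ∀ i, 1 ≤ i → i ≤ m + 1 → x i < X := by
    intro i h1 h2
    rcases eq_or_lt_of_le h2 with h | h
    · rw [h]; exact hX
    · exact (xmono hxy hyx (m+1) le_rfl i h1 h).trans hX
  have hyiX : ∀ i, 1 ≤ i → i ≤ m → y i < X := by
    intro i h1 h2
    exact (yxlt hxy hyx i (m+1) h1 (by omega) le_rfl h2).trans hX
  have hxne : ∀ i, 1 ≤ i → i ≤ m + 1 → (0:ℝ) < 1 - q ^ (X - x i) :=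
    fun i h1 h2 => one_sub_rpow_pos hq' (sub_pos.2 (hxiX i h1 h2))
  have hyne : ∀ i, 1 ≤ i → i ≤ m → (0:ℝ) < 1 - q ^ (X - y i) :=
    fun i h1 h2 => one_sub_rpow_pos hq' (sub_pos.2 (hyiX i h1 h2))
  have hmupos : ∀ k, 1 ≤ k → k ≤ m + 1 → 0 < muW q m x y k := mu_pos hq' hxy hyx
  -- rewrite Rgrow on Ici 0 via gfun
  have hcong : ∀ t ∈ Set.Ici (0:ℝ), Rgrow q m x y X t =
      ((1 - q) * (∏ i ∈ Finset.Icc 1 (m + 1), (1 - q ^ (X - x i))) *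
        (∏ i ∈ Finset.Icc 1 m, (1 - q ^ (X - y i)))) /
      ∏ i ∈ Finset.Icc 1 (m + 1), gfun q m x y X i t := by
    intro t ht
    unfold Rgrow
    congr 1
    refine Finset.prod_congr rfl ?_
    intro i hi
    rw [Finset.mem_Icc] at hi
    exact gfun_eq hq0 (hmupos i hi.1 hi.2).le ht
  set C : ℝ := (1 - q) * (∏ i ∈ Finset.Icc 1 (m + 1), (1 - q ^ (X - x i))) *
      (∏ i ∈ Finset.Icc 1 m, (1 - q ^ (X - y i))) with hC
  have hCne : C ≠ 0 := by
    rw [hC]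
    apply mul_ne_zero
    · apply mul_ne_zero (by linarith)
      apply Finset.prod_ne_zero_iff.2
      intro i hi; rw [Finset.mem_Icc] at hi
      exact (hxne i hi.1 hi.2).ne'
    · apply Finset.prod_ne_zero_iff.2
      intro i hi; rw [Finset.mem_Icc] at hi
      exact (hyne i hi.1 hi.2).ne'
  have hP0pos : 0 < ∏ i ∈ Finset.Icc 1 (m + 1), gfun q m x y X i 0 := by
    apply Finset.prod_pos
    intro i hi; rw [Finset.mem_Icc] at hi
    rw [gfun_zero hq0]
    exact pow_pos (hxne i hi.1 hi.2) 2
  have hP0ne : (∏ i ∈ Finset.Icc 1 (m + 1), gfun q m x y X i 0) ≠ 0 := hP0pos.ne'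
  have hR0 : Rgrow q m x y X 0 = C / ∏ i ∈ Finset.Icc 1 (m + 1), gfun q m x y X i 0 :=
    hcong 0 Set.self_mem_Ici
  have hR0ne : Rgrow q m x y X 0 ≠ 0 := by
    rw [hR0]; exact div_ne_zero hCne hP0ne
  constructor
  · -- Part 1 : time derivative
    have hgd : ∀ i ∈ Finset.Icc 1 (m+1), HasDerivWithinAt (gfun q m x y X i)
        (-(q ^ (X - x i) * (Real.log q) ^ 2 * muW q m x y i)) (Set.Ici 0) 0 := by
      intro i hi; rw [Finset.mem_Icc] at hi
      exact gfun_hasDeriv hq0 (hmupos i hi.1 hi.2).le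
    have hP := HasDerivWithinAt.fun_finsetProd hgd
    have hD := (hasDerivWithinAt_const (0:ℝ) (Set.Ici (0:ℝ)) C).div hP hP0ne
    have hfinal := hD.congr (fun t ht => hcong t ht) hR0
    refine hfinal.congr_deriv ?_
    -- value computation
    rw [hR0]
    have hDsum : (∑ i ∈ Finset.Icc 1 (m+1),
          (∏ j ∈ (Finset.Icc 1 (m+1)).erase i, gfun q m x y X j 0) •
            (-(q ^ (X - x i) * (Real.log q) ^ 2 * muW q m x y i)))
        = -((Real.log q) ^ 2 *
            (∑ k ∈ Finset.Icc 1 (m + 1),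
              muW q m x y k * q ^ (X - x k) / (1 - q ^ (X - x k)) ^ 2) *
            (∏ j ∈ Finset.Icc 1 (m+1), gfun q m x y X j 0)) := by
      rw [Finset.mul_sum, Finset.sum_mul, ← Finset.sum_neg_distrib]
      refine Finset.sum_congr rfl ?_
      intro k hk
      have hk' := hk; rw [Finset.mem_Icc] at hk'
      have hkne : (1 - q ^ (X - x k)) ≠ 0 := (hxne k hk'.1 hk'.2).ne'
      have hPe : (∏ j ∈ Finset.Icc 1 (m+1), gfun q m x y X j 0)
          = gfun q m x y X k 0 * ∏ j ∈ (Finset.Icc 1 (m+1)).erase k, gfun q m x y X j 0 :=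
        (Finset.mul_prod_erase _ _ hk).symm
      rw [smul_eq_mul, hPe, gfun_zero hq0]
      field_simp
    rw [hDsum]
    field_simp
    ring
  · -- Part 2 : Burgers equation in X
    have hReq : ∀ X' ∈ Set.Ioi (x (m+1)), Rgrow q m x y X' 0
        = (1 - q) * ∑ k ∈ Finset.Icc 1 (m + 1), muW q m x y k / (1 - q ^ (X' - x k)) := by
      intro X' hX'
      have hxiX' : ∀ i, 1 ≤ i → i ≤ m + 1 → x i < X' := by
        intro i h1 h2
        rcases eq_or_lt_of_le h2 with h | h
        · rw [h]; exact hX'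
        · exact (xmono hxy hyx (m+1) le_rfl i h1 h).trans hX'
      have hxne' : ∀ i ∈ Finset.Icc 1 (m+1), (1 - q ^ (X' - x i)) ≠ 0 := by
        intro i hi; rw [Finset.mem_Icc] at hi
        exact (one_sub_rpow_pos hq' (sub_pos.2 (hxiX' i hi.1 hi.2))).ne'
      have hPx'ne : (∏ i ∈ Finset.Icc 1 (m+1), (1 - q ^ (X' - x i))) ≠ 0 :=
        Finset.prod_ne_zero_iff.2 hxne'
      unfold Rgrow
      have hden : ∀ i ∈ Finset.Icc 1 (m+1),
          (1 - q ^ (X' - x i - Real.sqrt (muW q m x y i * 0))) *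
            (1 - q ^ (X' - x i + Real.sqrt (muW q m x y i * 0)))
          = (1 - q ^ (X' - x i)) ^ 2 := by
        intro i _
        rw [mul_zero, Real.sqrt_zero, sub_zero, add_zero, sq]
      rw [Finset.prod_congr rfl hden, Finset.prod_pow]
      rw [← pf q hq' m x y hxy hyx X' hX']
      field_simp
    have hEvEq : (fun X' => Rgrow q m x y X' 0)
        =ᶠ[nhds X] (fun X' => (1 - q) * ∑ k ∈ Finset.Icc 1 (m + 1),
            muW q m x y k / (1 - q ^ (X' - x k))) := by
      filter_upwards [isOpen_Ioi.mem_nhds (Set.mem_Ioi.2 hX)] with X' hX'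
      exact hReq X' hX'
    have hterm : ∀ k ∈ Finset.Icc 1 (m+1), HasDerivAt
        (fun X' => muW q m x y k / (1 - q ^ (X' - x k)))
        (muW q m x y k * (Real.log q * q ^ (X - x k)) / (1 - q ^ (X - x k)) ^ 2) X := by
      intro k hk; rw [Finset.mem_Icc] at hk
      have hps : HasDerivAt (fun X' : ℝ => q ^ (X' - x k)) (q ^ (X - x k) * Real.log q) X := by
        have h1 := (Real.hasStrictDerivAt_const_rpow hq0 (X - x k)).hasDerivAt
        have h2 : HasDerivAt (fun X' : ℝ => X' - x k) 1 X := (hasDerivAt_id X).sub_const (x k)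
        have := h1.comp X h2
        exact this.congr_deriv (by ring)
      have hd : HasDerivAt (fun X' : ℝ => 1 - q ^ (X' - x k))
          (-(q ^ (X - x k) * Real.log q)) X := by
        simpa using hps.const_sub 1
      have hne' : 1 - q ^ (X - x k) ≠ 0 := (hxne k hk.1 hk.2).ne'
      have h := (hasDerivAt_const X (muW q m x y k)).div hd hne'
      refine h.congr_deriv ?_
      ring
    have hsum := (HasDerivAt.fun_sum hterm).const_mul (1 - q)
    rw [hEvEq.deriv_eq, hsum.deriv]
    -- final arithmetic
    set S : ℝ := ∑ k ∈ Finset.Icc 1 (m + 1),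
        muW q m x y k * q ^ (X - x k) / (1 - q ^ (X - x k)) ^ 2 with hS
    have hfirst : (∑ k ∈ Finset.Icc 1 (m+1),
        muW q m x y k * (Real.log q * q ^ (X - x k)) / (1 - q ^ (X - x k)) ^ 2)
        = Real.log q * S := by
      rw [hS, Finset.mul_sum]
      exact Finset.sum_congr rfl fun k _ => by ring
    rw [hfirst, Real.log_inv]
    have hRR : (Rgrow q m x y X 0)⁻¹ * ((Real.log q) ^ 2 * S * Rgrow q m x y X 0)
        = (Real.log q) ^ 2 * S := by
      field_simp
    rw [mul_assoc ((1 - q) / -Real.log q), hRR]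
    have hkey : (1 - q) / -Real.log q * (Real.log q ^ 2 * S) = -((1 - q) * (Real.log q * S)) := by
      rw [div_mul_eq_mul_div, div_eq_iff (neg_ne_zero.2 hL0)]
      ring
    rw [hkey]
    ring
end
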